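/- arXiv:1611.03237 — 2 statements merged into one kernel-verified Lean document; each statement's English description precedes it below -/
import Mathlib

section
/- Fix a period L > 0, a point x₀ ∈ ℝ and an admissible nonlinearity f with zero a. Then there exists a bounded, nonnegative, nonzero function z ∈ C²([x₀,∞)) satisfying −z''(x) = z(x) f(z(x), x) for all x ∈ (x₀,∞) and z(x₀) = 0; this function is unique among bounded nonnegative nonzero C² solutions; and moreover z(x) > 0 for every x > x₀ and its right derivative at x₀ satisfies z'(x₀) > 0. -/
open MeasureTheory Set Filter Topology Function

noncomputable section

/-- An admissible nonlinearity with period `L` and zero `a`: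
`f` is `C¹`, `L`-periodic in its second variable, positive at `u = 0` uniformly in `x`,
decreasing in its first variable, and vanishes at `u = a` for all `x`. -/
structure Admissible (L : ℝ) (f : ℝ → ℝ → ℝ) (a : ℝ) : Prop where
  smooth : ContDiff ℝ 1 (uncurry f)
  periodic : ∀ u x, f u (x + L) = f u x
  pos_at_zero : ∃ m > 0, ∀ x, m ≤ f 0 x
  strict_anti : ∀ x, StrictAnti (fun u => f u x)
  zero_pos : 0 < a
  zero_root : ∀ x, f a x = 0

/-- `Zfun s φ t x = φ (x - s t, x)`. -/
def Zfun (s : ℝ) (φ : ℝ → ℝ → ℝ) : ℝ → ℝ → ℝ := fun t x => φ (x - s * t) x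

/-- A regular segregated pulsating front with speed `s` and profile `φ`. -/
structure SegFront (L d α a₁ a₂ : ℝ) (f₁ f₂ : ℝ → ℝ → ℝ) (s : ℝ)
    (φ : ℝ → ℝ → ℝ) : Prop where
  cont : Continuous (uncurry φ)
  bdd : ∃ M, ∀ ξ x, |φ ξ x| ≤ M
  per : ∀ ξ x, φ ξ (x + L) = φ ξ x
  mono : ∀ x, Antitone (fun ξ => φ ξ x)
  pos : ∃ ξ x, 0 < φ ξ x
  neg : ∃ ξ x, φ ξ x < 0
  lim_left : ∀ ε > 0, ∃ M, ∀ ξ, M ≤ ξ → ∀ x ∈ Icc (0:ℝ) L, |φ (-ξ) x - α * a₁| < ε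
  lim_right : ∀ ε > 0, ∃ M, ∀ ξ, M ≤ ξ → ∀ x ∈ Icc (0:ℝ) L, |φ ξ x + d * a₂| < ε
  pde : ∃ zt zx zxx : ℝ → ℝ → ℝ,
    (∀ t x, Zfun s φ t x ≠ 0 → HasDerivAt (fun τ => Zfun s φ τ x) (zt t x) t) ∧
    (∀ t x, Zfun s φ t x ≠ 0 → HasDerivAt (fun y => Zfun s φ t y) (zx t x) x) ∧
    (∀ t x, Zfun s φ t x ≠ 0 → HasDerivAt (fun y => zx t y) (zxx t x) x) ∧
    ContinuousOn (uncurry zt) {p : ℝ × ℝ | Zfun s φ p.1 p.2 ≠ 0} ∧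
    ContinuousOn (uncurry zx) {p : ℝ × ℝ | Zfun s φ p.1 p.2 ≠ 0} ∧
    ContinuousOn (uncurry zxx) {p : ℝ × ℝ | Zfun s φ p.1 p.2 ≠ 0} ∧
    (∀ t x, 0 < Zfun s φ t x →
      zt t x = zxx t x + Zfun s φ t x * f₁ (Zfun s φ t x / α) x) ∧
    (∀ t x, Zfun s φ t x < 0 →
      zt t x = d * zxx t x + Zfun s φ t x * f₂ (-(Zfun s φ t x) / d) x)

/-- The limiting nonlinearity `η(z, x)`. -/
def eta (d α : ℝ) (f₁ f₂ : ℝ → ℝ → ℝ) (z x : ℝ) : ℝ :=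
  f₁ (z / α) x * max z 0 - (1 / d) * f₂ (-z / d) x * (-(min z 0))

/-- A segregated stationary equilibrium. -/
structure SegEquilibrium (L d α : ℝ) (f₁ f₂ : ℝ → ℝ → ℝ) (e : ℝ → ℝ) : Prop where
  smooth : ContDiff ℝ 2 e
  bdd : ∃ M, ∀ x, |e x| ≤ M
  ode : ∀ x, -(deriv (deriv e) x) = eta d α f₁ f₂ (e x) x
  mono : ∀ x, Antitone (fun n : ℕ => e (x + n * L))
  pos : ∃ x, 0 < e x
  neg : ∃ x, e x < 0
  tail : BddBelow {x | e x < 0} ∨ BddAbove {x | 0 < e x}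

/-- The Du–Lin solution on `[x₀, ∞)`: bounded, nonnegative, nonzero, `C²`, vanishing
at `x₀`, solving `-z'' = z f(z, ·)` on `(x₀, ∞)`. -/
structure IsDuLin (x₀ : ℝ) (f : ℝ → ℝ → ℝ) (z : ℝ → ℝ) : Prop where
  diff1 : ∀ x ∈ Ici x₀, DifferentiableWithinAt ℝ z (Ici x₀) x
  diff2 : ∀ x ∈ Ici x₀,
    DifferentiableWithinAt ℝ (derivWithin z (Ici x₀)) (Ici x₀) x
  cont2 : ContinuousOn (derivWithin (derivWithin z (Ici x₀)) (Ici x₀)) (Ici x₀)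
  bdd : ∃ M, ∀ x ∈ Ici x₀, |z x| ≤ M
  nonneg : ∀ x ∈ Ici x₀, 0 ≤ z x
  nonzero : ∃ x ∈ Ici x₀, z x ≠ 0
  zero_at : z x₀ = 0
  ode : ∀ x ∈ Ioi x₀,
    -(derivWithin (derivWithin z (Ici x₀)) (Ici x₀) x) = z x * f (z x) x

/-- `∂ₜ` of a function of `(t, x)`. -/
def dT (u : ℝ → ℝ → ℝ) (t x : ℝ) : ℝ := deriv (fun τ => u τ x) t

/-- `∂ₓ` of a function of `(t, x)` (or of `(ξ, x)`). -/
def dX (u : ℝ → ℝ → ℝ) (t x : ℝ) : ℝ := deriv (fun y => u t y) x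

/-- `∂ₓₓ` of a function of `(t, x)`. -/
def dXX (u : ℝ → ℝ → ℝ) (t x : ℝ) : ℝ := deriv (fun y => dX u t y) x

/-- `∂_ξ` of a profile. -/
def dXi (φ : ℝ → ℝ → ℝ) (ξ x : ℝ) : ℝ := deriv (fun ζ => φ ζ x) ξ

/-- A pulsating front of the competition system `(P_k)`. -/
structure PkFront (L d α k a₁ a₂ : ℝ) (f₁ f₂ : ℝ → ℝ → ℝ) (c : ℝ)
    (φ₁ φ₂ : ℝ → ℝ → ℝ) : Prop where
  smooth1 : ContDiff ℝ 2 (uncurry φ₁)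
  smooth2 : ContDiff ℝ 2 (uncurry φ₂)
  per1 : ∀ ξ x, φ₁ ξ (x + L) = φ₁ ξ x
  per2 : ∀ ξ x, φ₂ ξ (x + L) = φ₂ ξ x
  mono1 : ∀ x, Antitone (fun ξ => φ₁ ξ x)
  mono2 : ∀ x, Monotone (fun ξ => φ₂ ξ x)
  pde1 : ∀ t x, dT (Zfun c φ₁) t x =
      dXX (Zfun c φ₁) t x + Zfun c φ₁ t x * f₁ (Zfun c φ₁ t x) x
        - k * Zfun c φ₁ t x * Zfun c φ₂ t x
  pde2 : ∀ t x, dT (Zfun c φ₂) t x =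
      d * dXX (Zfun c φ₂) t x + Zfun c φ₂ t x * f₂ (Zfun c φ₂ t x) x
        - α * k * Zfun c φ₁ t x * Zfun c φ₂ t x
  lim_left : ∀ ε > 0, ∃ M, ∀ ξ, ξ ≤ M → ∀ x ∈ Icc (0:ℝ) L,
      |φ₁ ξ x - a₁| < ε ∧ |φ₂ ξ x| < ε
  lim_right : ∀ ε > 0, ∃ M, ∀ ξ, M ≤ ξ → ∀ x ∈ Icc (0:ℝ) L,
      |φ₁ ξ x| < ε ∧ |φ₂ ξ x - a₂| < ε

/-- A positive pulsating front for the scalar equation `∂ₜ z = δ ∂ₓₓ z + z g(z, x)`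
connecting `a` to `0` at speed `s`. -/
structure ScalarFront (L δ a : ℝ) (g : ℝ → ℝ → ℝ) (s : ℝ) (ψ : ℝ → ℝ → ℝ) : Prop where
  smooth : ContDiff ℝ 2 (uncurry ψ)
  per : ∀ ξ x, ψ ξ (x + L) = ψ ξ x
  pos : ∀ ξ x, 0 < ψ ξ x
  pde : ∀ t x, dT (Zfun s ψ) t x =
      δ * dXX (Zfun s ψ) t x + Zfun s ψ t x * g (Zfun s ψ t x) x
  lim_left : ∀ ε > 0, ∃ M, ∀ ξ, ξ ≤ M → ∀ x ∈ Icc (0:ℝ) L, |ψ ξ x - a| < ε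
  lim_right : ∀ ε > 0, ∃ M, ∀ ξ, M ≤ ξ → ∀ x ∈ Icc (0:ℝ) L, |ψ ξ x| < ε

/-- `σ(v) = 1` if `v > 0`, `1/d` if `v < 0` (the value at `0` is irrelevant). -/
def sigmaFun (d v : ℝ) : ℝ := if 0 < v then 1 else if v < 0 then 1 / d else 0

/-- Extra regularity of a segregated pulsating front (established in the paper):
`z = Zfun s φ` is everywhere differentiable in `x` with `∂ₓ z` continuous on `ℝ²` and
negative on the zero set of `z`, and `∂ₜ z` exists off the zero set and has there the
strict sign of `s`. -/
def FrontRegular (s : ℝ) (φ zt zx : ℝ → ℝ → ℝ) : Prop :=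
  (∀ t x, HasDerivAt (fun y => Zfun s φ t y) (zx t x) x) ∧
  Continuous (uncurry zx) ∧
  (∀ t x, Zfun s φ t x = 0 → zx t x < 0) ∧
  (∀ t x, Zfun s φ t x ≠ 0 → HasDerivAt (fun τ => Zfun s φ τ x) (zt t x) t) ∧
  (0 < s → ∀ t x, Zfun s φ t x ≠ 0 → 0 < zt t x) ∧
  (s < 0 → ∀ t x, Zfun s φ t x ≠ 0 → zt t x < 0)

open scoped NNReal
set_option linter.unusedSectionVars false

namespace DL

variable (f : ℝ → ℝ → ℝ) (a L : ℝ)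

/-- clamp into `[-1, a+1]` -/
def cl (u : ℝ) : ℝ := max (min u (a+1)) (-1)

/-- cutoff nonlinearity -/
def Gf (u x : ℝ) : ℝ := cl a u * f (cl a u) x

/-- the vector field of the first-order system -/
def vf (x : ℝ) (p : ℝ × ℝ) : ℝ × ℝ := (p.2, -Gf f a p.1 x)

def Cf : ℝ := 1 + sSup ((fun p => |uncurry f p|) '' (Icc (-1) (a+1) ×ˢ Icc 0 L))
def K1 : ℝ := 1 + sSup ((fun p => ‖fderiv ℝ (uncurry f) p‖) '' (Icc (-1) (a+1) ×ˢ Icc 0 L))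
def KG : ℝ := Cf f a L + (max 1 (a+1)) * K1 f a L
def Kv : ℝ := max 1 (KG f a L)
def CG : ℝ := max 1 ((max 1 (a+1)) * Cf f a L)
def Kvnn : ℝ≥0 := Real.toNNReal (Kv f a L)

variable {f a L}

lemma cl_cont : Continuous (cl a) :=
  (continuous_id.min continuous_const).max continuous_const

variable (hL : 0 < L) (hf : Admissible L f a)

section Ctx
include hL hf

lemma ha : 0 < a := hf.zero_pos

lemma cl_mem (u : ℝ) : cl a u ∈ Icc (-1 : ℝ) (a+1) := by
  have ha' := hf.zero_pos
  constructor
  · exact le_max_right _ _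
  · have h1 : min u (a+1) ≤ a+1 := min_le_right _ _
    have h2 : (-1:ℝ) ≤ a+1 := by linarith
    exact max_le h1 h2

lemma cl_eq {u : ℝ} (h : u ∈ Icc (-1 : ℝ) (a+1)) : cl a u = u := by
  rw [cl, min_eq_left h.2, max_eq_left h.1]

lemma cl_abs_le (u : ℝ) : |cl a u| ≤ max 1 (a+1) := by
  have h := cl_mem hL hf u
  rw [abs_le]
  constructor
  · have : (-(max 1 (a+1)) : ℝ) ≤ -1 := neg_le_neg (le_max_left 1 (a+1))
    linarith [h.1]
  · exact h.2.trans (le_max_right _ _)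

lemma cl_lip (u v : ℝ) : |cl a u - cl a v| ≤ |u - v| := by
  refine (abs_max_sub_max_le_abs _ _ _).trans ?_
  have h := abs_min_sub_min_le_max u (a+1) v (a+1)
  simpa using h

lemma cl_ge {u : ℝ} (h : a ≤ u) : a ≤ cl a u := by
  have ha' := hf.zero_pos
  have h1 : a ≤ min u (a+1) := le_min h (by linarith)
  exact h1.trans (le_max_left _ _)

/-- reduce the second argument into `[0, L]`, uniformly in the first -/
lemma shift (x : ℝ) : ∃ y ∈ Icc (0:ℝ) L, ∀ u, f u y = f u x := by
  refine ⟨x - ⌊x / L⌋ * L, ⟨Int.sub_floor_div_mul_nonneg x hL, (Int.sub_floor_div_mul_lt x hL).le⟩, fun u => ?_⟩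
  have hper : Function.Periodic (f u) L := fun y => hf.periodic u y
  exact hper.sub_int_mul_eq _

lemma compactD : IsCompact ((Icc (-1:ℝ) (a+1)) ×ˢ (Icc (0:ℝ) L)) :=
  isCompact_Icc.prod isCompact_Icc

lemma hCf : (∀ u ∈ Icc (-1:ℝ) (a+1), ∀ x, |f u x| ≤ Cf f a L) ∧ 1 ≤ Cf f a L := by
  have hc : ContinuousOn (fun p => |uncurry f p|) ((Icc (-1:ℝ) (a+1)) ×ˢ (Icc (0:ℝ) L)) :=
    (hf.smooth.continuous.abs).continuousOn
  have hbdd := (compactD hL hf (f := f)).bddAbove_image hc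
  have hmem : ((0:ℝ), (0:ℝ)) ∈ (Icc (-1:ℝ) (a+1)) ×ˢ (Icc (0:ℝ) L) := by
    simp only [mem_prod, mem_Icc]
    refine ⟨⟨by linarith, by linarith [hf.zero_pos]⟩, le_refl 0, hL.le⟩
  have h0 : (0:ℝ) ≤ sSup ((fun p => |uncurry f p|) '' ((Icc (-1:ℝ) (a+1)) ×ˢ (Icc (0:ℝ) L))) := by
    refine le_trans (abs_nonneg (uncurry f (0,0))) (le_csSup hbdd ?_)
    exact mem_image_of_mem _ hmem
  refine ⟨fun u hu x => ?_, by simp only [Cf]; linarith⟩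
  obtain ⟨y, hy, hyx⟩ := shift hL hf x
  have : |f u x| = |uncurry f (u, y)| := by simp [uncurry, hyx u]
  rw [this, Cf]
  have : |uncurry f (u,y)| ≤ sSup _ := le_csSup hbdd (mem_image_of_mem _ ⟨hu, hy⟩)
  linarith

lemma hK1 : ∀ x, ∀ u ∈ Icc (-1:ℝ) (a+1), ∀ u' ∈ Icc (-1:ℝ) (a+1),
    |f u x - f u' x| ≤ K1 f a L * |u - u'| := by
  intro x u hu u' hu'
  obtain ⟨y, hy, hyx⟩ := shift hL hf x
  have hF : Differentiable ℝ (uncurry f) := hf.smooth.differentiable one_ne_zero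
  have hfd : Continuous (fun p => ‖fderiv ℝ (uncurry f) p‖) :=
    (hf.smooth.continuous_fderiv one_ne_zero).norm
  have hbdd := (compactD hL hf (f := f)).bddAbove_image hfd.continuousOn
  set S := sSup ((fun p => ‖fderiv ℝ (uncurry f) p‖) '' ((Icc (-1:ℝ) (a+1)) ×ˢ (Icc (0:ℝ) L)))
  have key : ∀ w ∈ Icc (-1:ℝ) (a+1),
      HasDerivWithinAt (fun u => f u y) ((fderiv ℝ (uncurry f) (w, y)) (1, 0))
        (Icc (-1:ℝ) (a+1)) w := by
    intro w _
    have h1 : HasFDerivAt (uncurry f) (fderiv ℝ (uncurry f) (w, y)) (w, y) :=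
      (hF (w, y)).hasFDerivAt
    have h2 : HasDerivAt (fun u : ℝ => (u, y)) ((1:ℝ), (0:ℝ)) w := by
      simpa using (hasDerivAt_id w).prodMk (hasDerivAt_const w y)
    exact (h1.comp_hasDerivAt w h2).hasDerivWithinAt
  have bound : ∀ w ∈ Icc (-1:ℝ) (a+1),
      ‖(fderiv ℝ (uncurry f) (w, y)) (1, 0)‖ ≤ K1 f a L := by
    intro w hw
    refine le_trans ((fderiv ℝ (uncurry f) (w, y)).le_opNorm _) ?_
    have h1 : ‖((1:ℝ), (0:ℝ))‖ = 1 := by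
      simp [Prod.norm_def]
    rw [h1, mul_one]
    have : ‖fderiv ℝ (uncurry f) (w, y)‖ ≤ S := le_csSup hbdd (mem_image_of_mem _ ⟨hw, hy⟩)
    have h0 : (0:ℝ) ≤ ‖fderiv ℝ (uncurry f) (w,y)‖ := norm_nonneg _
    simp only [K1]; linarith
  have := Convex.norm_image_sub_le_of_norm_hasDerivWithin_le key bound (convex_Icc _ _) hu' hu
  calc |f u x - f u' x| = ‖(fun u => f u y) u - (fun u => f u y) u'‖ := by
        simp [hyx u, hyx u', Real.norm_eq_abs]
    _ ≤ K1 f a L * ‖u - u'‖ := this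
    _ = K1 f a L * |u - u'| := by rw [Real.norm_eq_abs]

lemma hK1_pos : 1 ≤ K1 f a L := by
  have hfd : Continuous (fun p => ‖fderiv ℝ (uncurry f) p‖) :=
    (hf.smooth.continuous_fderiv one_ne_zero).norm
  have hbdd := (compactD hL hf (f := f)).bddAbove_image hfd.continuousOn
  have hmem : ((0:ℝ), (0:ℝ)) ∈ (Icc (-1:ℝ) (a+1)) ×ˢ (Icc (0:ℝ) L) := by
    simp only [mem_prod, mem_Icc]
    refine ⟨⟨by linarith, by linarith [hf.zero_pos]⟩, le_refl 0, hL.le⟩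
  have h0 : (0:ℝ) ≤ sSup ((fun p => ‖fderiv ℝ (uncurry f) p‖) '' ((Icc (-1:ℝ) (a+1)) ×ˢ (Icc (0:ℝ) L))) :=
    le_trans (norm_nonneg _) (le_csSup hbdd (mem_image_of_mem _ hmem))
  simp only [K1]; linarith

lemma hGf_lip (x u u' : ℝ) : |Gf f a u x - Gf f a u' x| ≤ KG f a L * |u - u'| := by
  have h1 := cl_mem hL hf u
  have h2 := cl_mem hL hf u'
  have hb1 := (hCf hL hf).1 _ h2 x
  have hlipf := hK1 hL hf x _ h1 _ h2
  have hcl := cl_lip hL hf u u'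
  have hK1p : (1:ℝ) ≤ K1 f a L := hK1_pos hL hf
  have hlipf2 : |f (cl a u) x - f (cl a u') x| ≤ K1 f a L * |u - u'| :=
    hlipf.trans (mul_le_mul_of_nonneg_left hcl (by linarith))
  have habs := cl_abs_le hL hf u
  have key : Gf f a u x - Gf f a u' x
      = (cl a u - cl a u') * f (cl a u') x + cl a u * (f (cl a u) x - f (cl a u') x) := by
    simp only [Gf]; ring
  rw [key]
  have e1 : |(cl a u - cl a u') * f (cl a u') x| ≤ |u - u'| * Cf f a L := by
    rw [abs_mul]
    exact mul_le_mul hcl hb1 (abs_nonneg _) (abs_nonneg _)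
  have e2 : |cl a u * (f (cl a u) x - f (cl a u') x)| ≤ max 1 (a+1) * (K1 f a L * |u - u'|) := by
    rw [abs_mul]
    exact mul_le_mul habs hlipf2 (abs_nonneg _) (le_trans (by norm_num) (le_max_left 1 (a+1)))
  calc |_ + _| ≤ _ := abs_add_le _ _
    _ ≤ |u - u'| * Cf f a L + max 1 (a+1) * (K1 f a L * |u - u'|) := add_le_add e1 e2
    _ = KG f a L * |u - u'| := by rw [KG]; ring

lemma hGf_bdd (u x : ℝ) : |Gf f a u x| ≤ CG f a L := by
  have h1 := cl_mem hL hf u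
  have hb := (hCf hL hf).1 _ h1 x
  have habs := cl_abs_le hL hf u
  rw [Gf, abs_mul]
  refine le_trans (mul_le_mul habs hb (abs_nonneg _)
    (le_trans (by norm_num) (le_max_left 1 (a+1)))) (le_max_right _ _)

lemma hCG_pos : (1:ℝ) ≤ CG f a L := le_max_left _ _

lemma hGf_cont : Continuous (fun p : ℝ × ℝ => Gf f a p.1 p.2) := by
  have h1 : Continuous fun p : ℝ × ℝ => cl a p.1 := (cl_cont (a := a)).comp continuous_fst
  have h2 : Continuous fun p : ℝ × ℝ => f (cl a p.1) p.2 :=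
    hf.smooth.continuous.comp (h1.prodMk continuous_snd)
  exact h1.mul h2

lemma hvf_lip (x : ℝ) : LipschitzWith (Kvnn f a L) (vf f a x) := by
  refine LipschitzWith.of_dist_le_mul fun p q => ?_
  have hKv1 : (1:ℝ) ≤ Kv f a L := le_max_left _ _
  have hKG : KG f a L ≤ Kv f a L := le_max_right _ _
  have hco : (Kvnn f a L : ℝ) = Kv f a L := Real.coe_toNNReal _ (by linarith)
  rw [hco, Prod.dist_eq, vf, vf]
  have hd2 : dist p.2 q.2 ≤ dist p q := by rw [Prod.dist_eq]; exact le_max_right _ _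
  have hd1 : dist p.1 q.1 ≤ dist p q := by rw [Prod.dist_eq]; exact le_max_left _ _
  have hdnn : (0:ℝ) ≤ dist p q := dist_nonneg
  refine max_le ?_ ?_
  · calc dist p.2 q.2 ≤ 1 * dist p q := by linarith
      _ ≤ Kv f a L * dist p q := by nlinarith
  · simp only [Real.dist_eq]
    have heq : (-Gf f a p.1 x) - (-Gf f a q.1 x) = -(Gf f a p.1 x - Gf f a q.1 x) := by ring
    rw [heq, abs_neg]
    calc |Gf f a p.1 x - Gf f a q.1 x| ≤ KG f a L * |p.1 - q.1| := hGf_lip hL hf x _ _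
      _ ≤ Kv f a L * dist p q := by
          have h1 : |p.1 - q.1| = dist p.1 q.1 := (Real.dist_eq _ _).symm
          rw [h1]
          have hKG0 : (0:ℝ) ≤ KG f a L := by
            have h2 : (1:ℝ) ≤ Cf f a L := (hCf hL hf).2
            have h3 : (1:ℝ) ≤ K1 f a L := hK1_pos hL hf
            have h4 : (1:ℝ) ≤ max 1 (a+1) := le_max_left _ _
            simp only [KG]; nlinarith
          exact mul_le_mul hKG hd1 dist_nonneg (by linarith)

lemma hvf_cont (p : ℝ × ℝ) : Continuous fun x => vf f a x p := by
  refine continuous_const.prodMk ?_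
  exact ((hGf_cont hL hf).comp (continuous_const.prodMk continuous_id)).neg

lemma Gf_zero (x : ℝ) : Gf f a 0 x = 0 := by
  have h : cl a 0 = 0 := cl_eq hL hf ⟨by norm_num, by linarith [hf.zero_pos]⟩
  simp [Gf, h]

lemma Gf_a (x : ℝ) : Gf f a a x = 0 := by
  have h : cl a a = a := cl_eq hL hf ⟨by linarith [hf.zero_pos], by linarith⟩
  simp [Gf, h, hf.zero_root x]

lemma Gf_eq {u : ℝ} (h : u ∈ Icc (-1:ℝ) (a+1)) (x : ℝ) : Gf f a u x = u * f u x := by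
  rw [Gf, cl_eq hL hf h]

lemma Gf_eq' {u : ℝ} (h0 : 0 ≤ u) (h1 : u ≤ a) (x : ℝ) : Gf f a u x = u * f u x :=
  Gf_eq hL hf ⟨by linarith, by linarith⟩ x

lemma Gf_nonpos_of_ge {u : ℝ} (h : a ≤ u) (x : ℝ) : Gf f a u x ≤ 0 := by
  have h1 := cl_ge hL hf h
  have h2 : f (cl a u) x ≤ 0 := by
    rcases eq_or_lt_of_le h1 with h3 | h3
    · rw [← h3, hf.zero_root x]
    · have h4 : f (cl a u) x < f a x := (hf.strict_anti x) h3
      rw [hf.zero_root x] at h4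
      exact h4.le
  have h3 : 0 < cl a u := lt_of_lt_of_le hf.zero_pos h1
  rw [Gf]
  exact mul_nonpos_of_nonneg_of_nonpos h3.le h2

lemma f_nonneg_of_le {u : ℝ} (h : u ≤ a) (x : ℝ) : 0 ≤ f u x := by
  rcases eq_or_lt_of_le h with h1 | h1
  · rw [h1, hf.zero_root x]
  · have h4 : f a x < f u x := (hf.strict_anti x) h1
    rw [hf.zero_root x] at h4
    exact h4.le

lemma Gf_nonneg_on {u : ℝ} (h0 : 0 ≤ u) (h1 : u ≤ a) (x : ℝ) : 0 ≤ Gf f a u x := by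
  rw [Gf_eq' hL hf h0 h1]
  exact mul_nonneg h0 (f_nonneg_of_le hL hf h1 x)

/-- uniform positive lower bound for `f` below a level `c < a` -/
lemma f_lower {c : ℝ} (hc0 : 0 ≤ c) (hc : c < a) :
    ∃ m > 0, ∀ x, ∀ u, u ≤ c → m ≤ f u x := by
  have hcont : ContinuousOn (fun x => f c x) (Icc 0 L) := by
    have : Continuous fun x => f c x := hf.smooth.continuous.comp (continuous_const.prodMk continuous_id)
    exact this.continuousOn
  obtain ⟨x₁, hx₁, hmin⟩ := isCompact_Icc.exists_isMinOn ⟨0, le_refl 0, hL.le⟩ hcont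
  refine ⟨f c x₁, ?_, fun x u hu => ?_⟩
  · have h4 : f a x₁ < f c x₁ := (hf.strict_anti x₁) hc
    rw [hf.zero_root x₁] at h4
    exact h4
  · obtain ⟨y, hy, hyx⟩ := shift hL hf x
    have h1 : f c x₁ ≤ f c y := hmin hy
    have h2 : f c y ≤ f u y := by
      rcases eq_or_lt_of_le hu with h | h
      · rw [h]
      · have h4 : f c y < f u y := (hf.strict_anti y) h
        exact h4.le
    rw [← hyx u]; linarith

lemma hKv_one : (1:ℝ) ≤ Kv f a L := le_max_left _ _

end Ctx

variable (f a L) in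
def tau : ℝ := (2 * (Kv f a L + 1))⁻¹

lemma tau_pos : 0 < tau f a L := by
  have h : (1:ℝ) ≤ Kv f a L := le_max_left _ _
  rw [tau]; positivity

lemma tau_mul : Kv f a L * tau f a L ≤ 1/2 := by
  have h : (1:ℝ) ≤ Kv f a L := le_max_left _ _
  rw [tau]
  rw [mul_inv_le_iff₀ (by linarith)]
  nlinarith

section Ctx2
include hL hf

lemma norm_vf_le (x : ℝ) (p : ℝ × ℝ) : ‖vf f a x p‖ ≤ ‖p‖ + CG f a L := by
  rw [vf, Prod.norm_def]
  refine max_le ?_ ?_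
  · have h1 : ‖p.2‖ ≤ ‖p‖ := norm_snd_le p
    have h2 : (1:ℝ) ≤ CG f a L := hCG_pos hL hf
    simp only [Real.norm_eq_abs] at *
    linarith
  · have h1 := hGf_bdd hL hf p.1 x
    have h2 : (0:ℝ) ≤ ‖p‖ := norm_nonneg _
    simp only [Real.norm_eq_abs, abs_neg]
    linarith

lemma step_exists (t₀ : ℝ) (y₀ : ℝ × ℝ) :
    ∃ Y : ℝ → ℝ × ℝ, Y t₀ = y₀ ∧ ∀ t ∈ Icc t₀ (t₀ + tau f a L),
      HasDerivWithinAt Y (vf f a t (Y t)) (Icc t₀ (t₀ + tau f a L)) t := by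
  have hKv1 : (1:ℝ) ≤ Kv f a L := le_max_left _ _
  have hCG1 : (1:ℝ) ≤ CG f a L := hCG_pos hL hf
  have hτ := tau_pos (f := f) (a := a) (L := L)
  have hτK := tau_mul (f := f) (a := a) (L := L)
  set τ := tau f a L with hτdef
  set C₀ : ℝ := ‖y₀‖ + CG f a L with hC₀
  have hC₀pos : 0 < C₀ := by have := norm_nonneg y₀; simp only [hC₀]; linarith
  set R : ℝ := 2 * τ * C₀ + 1 with hR
  have hRpos : 0 < R := by positivity
  set C : ℝ := C₀ + Kv f a L * R with hC
  have hco : (Kvnn f a L : ℝ) = Kv f a L := Real.coe_toNNReal _ (by linarith)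
  have hRnn : ((R.toNNReal : ℝ)) = R := Real.coe_toNNReal _ hRpos.le
  have hCnn : ((C.toNNReal : ℝ)) = C := Real.coe_toNNReal _ (by
    have : 0 ≤ Kv f a L * R := mul_nonneg (by linarith) hRpos.le
    linarith)
  have hpl : IsPicardLindelof (vf f a) (tmin := t₀) (tmax := t₀+τ) ⟨t₀, le_refl _, by linarith⟩ y₀
      R.toNNReal 0 C.toNNReal (Kvnn f a L) := by
    refine ⟨fun t _ => (hvf_lip hL hf t).lipschitzOnWith,
      fun x _ => (hvf_cont hL hf x).continuousOn, fun t _ x hx => ?_, ?_⟩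
    · rw [hCnn]
      have hx : x ∈ Metric.closedBall y₀ R := by rwa [hRnn] at hx
      have h1 : ‖vf f a t y₀‖ ≤ C₀ := norm_vf_le hL hf t y₀
      have h2 : dist (vf f a t x) (vf f a t y₀) ≤ Kv f a L * R := by
        have := (hvf_lip hL hf t).dist_le_mul x y₀
        rw [hco] at this
        refine this.trans ?_
        have hd : dist x y₀ ≤ R := Metric.mem_closedBall.mp hx
        nlinarith [dist_nonneg (x := x) (y := y₀)]
      calc ‖vf f a t x‖ = ‖vf f a t y₀ + (vf f a t x - vf f a t y₀)‖ := by ring_nf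
        _ ≤ ‖vf f a t y₀‖ + ‖vf f a t x - vf f a t y₀‖ := norm_add_le _ _
        _ ≤ C₀ + Kv f a L * R := by rw [← dist_eq_norm] at *; exact add_le_add h1 h2
    · show (C.toNNReal:ℝ) * max (t₀ + τ - t₀) (t₀ - t₀) ≤ (R.toNNReal:ℝ) - ((0:NNReal):ℝ)
      rw [hCnn, hRnn, NNReal.coe_zero, sub_zero]
      have hmax : max (t₀ + τ - t₀) (t₀ - t₀) = τ := by
        rw [max_eq_left] <;> linarith
      rw [hmax, hC]
      have h1 : Kv f a L * R * τ ≤ R / 2 := by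
        have h2 : Kv f a L * τ ≤ 1/2 := hτK
        nlinarith
      nlinarith
  obtain ⟨Y, hY0, hY⟩ := hpl.exists_eq_forall_mem_Icc_hasDerivWithinAt₀
  exact ⟨Y, hY0, hY⟩

end Ctx2

open scoped Classical in
/-- one Picard–Lindelöf step, as a total function -/
def stepSol (f : ℝ → ℝ → ℝ) (a L : ℝ) (t₀ : ℝ) (y₀ : ℝ × ℝ) : ℝ → ℝ × ℝ :=
  if h : ∃ Y : ℝ → ℝ × ℝ, Y t₀ = y₀ ∧ ∀ t ∈ Icc t₀ (t₀ + tau f a L),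
      HasDerivWithinAt Y (vf f a t (Y t)) (Icc t₀ (t₀ + tau f a L)) t
  then h.choose else fun _ => y₀

lemma stepSol_spec (hL : 0 < L) (hf : Admissible L f a) (t₀ : ℝ) (y₀ : ℝ × ℝ) :
    stepSol f a L t₀ y₀ t₀ = y₀ ∧ ∀ t ∈ Icc t₀ (t₀ + tau f a L),
      HasDerivWithinAt (stepSol f a L t₀ y₀) (vf f a t (stepSol f a L t₀ y₀ t))
        (Icc t₀ (t₀ + tau f a L)) t := by
  rw [stepSol, dif_pos (step_exists hL hf t₀ y₀)]
  exact (step_exists hL hf t₀ y₀).choose_spec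

/-- chained solutions -/
def Yseq (f : ℝ → ℝ → ℝ) (a L : ℝ) (x₀ b : ℝ) : ℕ → ℝ → ℝ × ℝ
  | 0 => fun _ => (0, b)
  | n+1 => fun t =>
      if t ≤ x₀ + n * tau f a L then Yseq f a L x₀ b n t
      else stepSol f a L (x₀ + n * tau f a L) (Yseq f a L x₀ b n (x₀ + n * tau f a L)) t

lemma Yseq_compat {x₀ b : ℝ} {m n : ℕ} (hmn : n ≤ m) {t : ℝ} (ht : t ≤ x₀ + n * tau f a L) :
    Yseq f a L x₀ b m t = Yseq f a L x₀ b n t := by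
  induction m with
  | zero => have : n = 0 := Nat.le_zero.mp hmn; rw [this]
  | succ k ih =>
    rcases Nat.lt_or_ge n (k+1) with h | h
    · have hnk : n ≤ k := Nat.lt_succ_iff.mp h
      have hτ := tau_pos (f := f) (a := a) (L := L)
      have ht' : t ≤ x₀ + k * tau f a L := by
        have : (n : ℝ) ≤ k := Nat.cast_le.mpr hnk
        nlinarith
      have hstep : Yseq f a L x₀ b (k+1) t
          = if t ≤ x₀ + k * tau f a L then Yseq f a L x₀ b k t
            else stepSol f a L (x₀ + k * tau f a L) (Yseq f a L x₀ b k (x₀ + k * tau f a L)) t := rfl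
      rw [hstep, if_pos ht']
      exact ih hnk
    · have : n = k + 1 := le_antisymm hmn h
      rw [this]

lemma hasDerivWithinAt_singleton' (Z : ℝ → ℝ × ℝ) (x : ℝ) (d : ℝ × ℝ) :
    HasDerivWithinAt Z d {x} x := by
  rw [hasDerivWithinAt_iff_tendsto_slope]
  simp [nhdsWithin_empty]

lemma Yseq_sol (hL : 0 < L) (hf : Admissible L f a) (x₀ b : ℝ) (n : ℕ) :
    Yseq f a L x₀ b n x₀ = (0, b) ∧ ∀ t ∈ Icc x₀ (x₀ + n * tau f a L),
      HasDerivWithinAt (Yseq f a L x₀ b n) (vf f a t (Yseq f a L x₀ b n t))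
        (Icc x₀ (x₀ + n * tau f a L)) t := by
  have hτ := tau_pos (f := f) (a := a) (L := L)
  induction n with
  | zero =>
    constructor
    · rfl
    · intro t ht
      simp only [Nat.cast_zero, zero_mul, add_zero, Icc_self] at ht ⊢
      rw [mem_singleton_iff] at ht
      subst ht
      exact hasDerivWithinAt_singleton' _ _ _
  | succ n ih =>
    set τ := tau f a L with hτdef
    set c : ℝ := x₀ + n * τ with hc
    have hcc' : x₀ + (n+1 : ℕ) * τ = c + τ := by push_cast; ring
    have hx₀c : x₀ ≤ c := by
      have hnn : (0:ℝ) ≤ n * τ := by positivity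
      simp only [hc]; linarith
    set S := stepSol f a L c (Yseq f a L x₀ b n c) with hS
    obtain ⟨hS0, hSd⟩ := stepSol_spec hL hf c (Yseq f a L x₀ b n c)
    have hYdef : ∀ t, Yseq f a L x₀ b (n+1) t = if t ≤ c then Yseq f a L x₀ b n t else S t := by
      intro t; rfl
    constructor
    · rw [hYdef, if_pos hx₀c]; exact ih.1
    · intro t ht
      rw [hcc'] at ht
      rcases lt_trichotomy t c with hlt | heq | hgt
      · -- t < c
        have ht' : t ∈ Icc x₀ c := ⟨ht.1, hlt.le⟩
        have h1 := ih.2 t ht'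
        have hmem : Icc x₀ c ∈ 𝓝[Icc x₀ (x₀ + (n+1:ℕ) * τ)] t := by
          refine mem_of_superset (inter_mem_nhdsWithin _ (Iic_mem_nhds hlt)) ?_
          exact fun u hu => ⟨hu.1.1, hu.2⟩
        have h2 := h1.mono_of_mem_nhdsWithin hmem
        have hev : Yseq f a L x₀ b (n+1) =ᶠ[𝓝[Icc x₀ (x₀ + (n+1:ℕ) * τ)] t] Yseq f a L x₀ b n := by
          refine mem_of_superset (mem_nhdsWithin_of_mem_nhds (Iic_mem_nhds hlt)) ?_
          intro u hu
          show Yseq f a L x₀ b (n+1) u = Yseq f a L x₀ b n u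
          rw [hYdef u, if_pos (mem_Iic.mp hu)]
        have h3 := h2.congr_of_eventuallyEq hev (by rw [hYdef t, if_pos hlt.le])
        have hval : vf f a t (Yseq f a L x₀ b n t) = vf f a t (Yseq f a L x₀ b (n+1) t) := by
          rw [hYdef t, if_pos hlt.le]
        rwa [hval] at h3
      · -- t = c
        subst heq
        have hYc : Yseq f a L x₀ b (n+1) c = Yseq f a L x₀ b n c := by
          rw [hYdef c, if_pos le_rfl]
        have hIccL : Icc x₀ (x₀ + (n+1:ℕ) * τ) ∩ Iic c = Icc x₀ c := by
          ext u
          simp only [mem_inter_iff, mem_Icc, mem_Iic, hcc']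
          constructor
          · rintro ⟨⟨h1, _⟩, h3⟩; exact ⟨h1, h3⟩
          · rintro ⟨h1, h2⟩; exact ⟨⟨h1, by linarith⟩, h2⟩
        have hL1 : HasDerivWithinAt (Yseq f a L x₀ b (n+1)) (vf f a c (Yseq f a L x₀ b n c))
            (Icc x₀ (x₀ + (n+1:ℕ) * τ) ∩ Iic c) c := by
          rw [hIccL]
          have h1 := ih.2 c ⟨hx₀c, le_refl _⟩
          have h1' := h1.mono (Icc_subset_Icc_right (le_refl _) : Icc x₀ c ⊆ Icc x₀ (x₀ + n * τ))
          refine h1'.congr ?_ hYc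
          intro u hu
          rw [hYdef u, if_pos hu.2]
        have hR1 : HasDerivWithinAt (Yseq f a L x₀ b (n+1)) (vf f a c (Yseq f a L x₀ b n c))
            (Icc x₀ (x₀ + (n+1:ℕ) * τ) ∩ Ici c) c := by
          have hsub : Icc x₀ (x₀ + (n+1:ℕ) * τ) ∩ Ici c ⊆ Icc c (c + τ) := by
            intro u hu
            rcases hu with ⟨⟨_, h2⟩, h3⟩
            rw [hcc'] at h2
            exact ⟨h3, h2⟩
          have h1 := (hSd c ⟨le_refl _, by linarith⟩).mono hsub
          rw [hS0] at h1
          refine h1.congr ?_ (by rw [hYc, hS0])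
          intro u hu
          rw [hYdef u]
          rcases le_or_gt u c with h | h
          · have hut : u = c := le_antisymm h hu.2
            rw [if_pos h, hut, hS0]
          · rw [if_neg (not_le.mpr h)]
        have hunion := hL1.union hR1
        have hset : (Icc x₀ (x₀ + (n+1:ℕ) * τ) ∩ Iic c) ∪ (Icc x₀ (x₀ + (n+1:ℕ) * τ) ∩ Ici c)
            = Icc x₀ (x₀ + (n+1:ℕ) * τ) := by
          rw [← inter_union_distrib_left, Iic_union_Ici, inter_univ]
        rw [hset] at hunion
        have hval : vf f a c (Yseq f a L x₀ b n c) = vf f a c (Yseq f a L x₀ b (n+1) c) := by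
          rw [hYc]
        rwa [hval] at hunion
      · -- t > c
        have ht2 : t ∈ Icc c (c + τ) := ⟨hgt.le, ht.2⟩
        have h1 := hSd t ht2
        have hmem : Icc c (c + τ) ∈ 𝓝[Icc x₀ (x₀ + (n+1:ℕ) * τ)] t := by
          refine mem_of_superset (inter_mem_nhdsWithin _ (Ioi_mem_nhds hgt)) ?_
          intro u hu
          rcases hu with ⟨⟨_, h2⟩, h3⟩
          rw [hcc'] at h2
          exact ⟨le_of_lt h3, h2⟩
        have h2 := h1.mono_of_mem_nhdsWithin hmem
        have hev : Yseq f a L x₀ b (n+1) =ᶠ[𝓝[Icc x₀ (x₀ + (n+1:ℕ) * τ)] t] S := by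
          refine mem_of_superset (mem_nhdsWithin_of_mem_nhds (Ioi_mem_nhds hgt)) ?_
          intro u hu
          show Yseq f a L x₀ b (n+1) u = S u
          rw [hYdef u, if_neg (not_le.mpr (mem_Ioi.mp hu))]
        have h3 := h2.congr_of_eventuallyEq hev (by rw [hYdef t, if_neg (not_le.mpr hgt)])
        have hval : vf f a t (S t) = vf f a t (Yseq f a L x₀ b (n+1) t) := by
          rw [hYdef t, if_neg (not_le.mpr hgt)]
        rwa [hval] at h3

/-- the global solution with initial data `(0, b)` at `x₀` -/
def Zb (f : ℝ → ℝ → ℝ) (a L : ℝ) (x₀ b : ℝ) : ℝ → ℝ × ℝ := fun t => Yseq f a L x₀ b ⌈(t - x₀) / tau f a L⌉₊ t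

lemma Zb_eq_Yseq {x₀ b : ℝ} {n : ℕ} {t : ℝ} (ht : t ≤ x₀ + n * tau f a L) :
    Zb f a L x₀ b t = Yseq f a L x₀ b n t := by
  have hτ := tau_pos (f := f) (a := a) (L := L)
  set m := ⌈(t - x₀) / tau f a L⌉₊ with hm
  have h1 : t ≤ x₀ + m * tau f a L := by
    rcases le_or_gt (t - x₀) 0 with h | h
    · have : (0:ℝ) ≤ m * tau f a L := by positivity
      linarith
    · have h2 : (t - x₀) / tau f a L ≤ m := Nat.le_ceil _
      rw [div_le_iff₀ hτ] at h2
      linarith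
  have h2 : m ≤ n := by
    rw [hm]
    refine Nat.ceil_le.mpr ?_
    rw [div_le_iff₀ hτ]
    linarith
  rw [Zb, ← hm]
  exact (Yseq_compat h2 h1).symm

/-- being a global forward solution of the system -/
def SysSol (f : ℝ → ℝ → ℝ) (a : ℝ) (x₀ : ℝ) (Z : ℝ → ℝ × ℝ) : Prop :=
  (∀ t ∈ Ici x₀, HasDerivWithinAt Z (vf f a t (Z t)) (Ici x₀) t) ∧
  (∀ t ∈ Ioi x₀, HasDerivAt Z (vf f a t (Z t)) t)

lemma Zb_init (x₀ b : ℝ) : Zb f a L x₀ b x₀ = (0, b) := by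
  have hτ := tau_pos (f := f) (a := a) (L := L)
  have h := Zb_eq_Yseq (f := f) (a := a) (L := L) (x₀ := x₀) (b := b) (n := 0) (t := x₀) (by simp)
  rw [h]
  rfl

lemma Zb_sysSol (hL : 0 < L) (hf : Admissible L f a) (x₀ b : ℝ) :
    SysSol f a x₀ (Zb f a L x₀ b) := by
  have hτ := tau_pos (f := f) (a := a) (L := L)
  have key : ∀ t ∈ Ici x₀, HasDerivWithinAt (Zb f a L x₀ b)
      (vf f a t (Zb f a L x₀ b t)) (Ici x₀) t ∧
      (x₀ < t → HasDerivAt (Zb f a L x₀ b) (vf f a t (Zb f a L x₀ b t)) t) := by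
    intro t ht
    obtain ⟨n, hn⟩ : ∃ n : ℕ, t + 1 ≤ x₀ + n * tau f a L := by
      obtain ⟨n, hn⟩ := exists_nat_gt ((t + 1 - x₀) / tau f a L)
      refine ⟨n, ?_⟩
      rw [div_lt_iff₀ hτ] at hn
      linarith
    have htn : t ∈ Icc x₀ (x₀ + n * tau f a L) := ⟨ht, by linarith⟩
    have h1 := (Yseq_sol hL hf x₀ b n).2 t htn
    have hev : ∀ u ∈ Icc x₀ (x₀ + n * tau f a L), Zb f a L x₀ b u = Yseq f a L x₀ b n u :=
      fun u hu => Zb_eq_Yseq hu.2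
    have hval : vf f a t (Yseq f a L x₀ b n t) = vf f a t (Zb f a L x₀ b t) := by
      rw [hev t htn]
    constructor
    · have hmem : Icc x₀ (x₀ + n * tau f a L) ∈ 𝓝[Ici x₀] t := by
        refine mem_of_superset (inter_mem_nhdsWithin _
          (Iic_mem_nhds (show t < x₀ + n * tau f a L by linarith))) ?_
        exact fun u hu => ⟨hu.1, hu.2⟩
      have h2 := (h1.mono_of_mem_nhdsWithin hmem).congr_of_eventuallyEq
        (mem_of_superset hmem fun u hu => hev u hu) (hev t htn)
      rwa [hval] at h2
    · intro hx₀t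
      have hmem : Icc x₀ (x₀ + n * tau f a L) ∈ 𝓝 t :=
        Icc_mem_nhds hx₀t (by linarith)
      have h2 := (h1.hasDerivAt hmem).congr_of_eventuallyEq
        (eventuallyEq_of_mem hmem fun u hu => hev u hu)
      rwa [hval] at h2
  exact ⟨fun t ht => (key t ht).1,
    fun t ht => (key t (le_of_lt (mem_Ioi.mp ht))).2 (mem_Ioi.mp ht)⟩

section Helpers

lemma hasDerivAt_fst' {Z : ℝ → ℝ × ℝ} {d : ℝ × ℝ} {t : ℝ} (h : HasDerivAt Z d t) :
    HasDerivAt (fun u => (Z u).1) d.1 t := by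
  have h2 := (ContinuousLinearMap.fst ℝ ℝ ℝ).hasFDerivAt.comp_hasDerivAt t h
  exact h2

lemma hasDerivAt_snd' {Z : ℝ → ℝ × ℝ} {d : ℝ × ℝ} {t : ℝ} (h : HasDerivAt Z d t) :
    HasDerivAt (fun u => (Z u).2) d.2 t := by
  have h2 := (ContinuousLinearMap.snd ℝ ℝ ℝ).hasFDerivAt.comp_hasDerivAt t h
  exact h2

lemma hasDerivWithinAt_fst' {Z : ℝ → ℝ × ℝ} {d : ℝ × ℝ} {s : Set ℝ} {t : ℝ}
    (h : HasDerivWithinAt Z d s t) : HasDerivWithinAt (fun u => (Z u).1) d.1 s t := by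
  have h2 := (ContinuousLinearMap.fst ℝ ℝ ℝ).hasFDerivAt.comp_hasDerivWithinAt t h
  exact h2

lemma hasDerivWithinAt_snd' {Z : ℝ → ℝ × ℝ} {d : ℝ × ℝ} {s : Set ℝ} {t : ℝ}
    (h : HasDerivWithinAt Z d s t) : HasDerivWithinAt (fun u => (Z u).2) d.2 s t := by
  have h2 := (ContinuousLinearMap.snd ℝ ℝ ℝ).hasFDerivAt.comp_hasDerivWithinAt t h
  exact h2

/-- monotonicity from one-sided derivative data -/
lemma monoOn_of_deriv {g g' : ℝ → ℝ} {s t : ℝ}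
    (hcont : ContinuousOn g (Icc s t)) (hd : ∀ u ∈ Ioo s t, HasDerivAt g (g' u) u)
    (hsign : ∀ u ∈ Ioo s t, 0 ≤ g' u) : MonotoneOn g (Icc s t) := by
  refine monotoneOn_of_deriv_nonneg (convex_Icc s t) hcont ?_ ?_
  · intro u hu
    rw [interior_Icc] at hu
    exact ((hd u hu).differentiableAt).differentiableWithinAt
  · intro u hu
    rw [interior_Icc] at hu
    rw [(hd u hu).deriv]
    exact hsign u hu

lemma antiOn_of_deriv {g g' : ℝ → ℝ} {s t : ℝ}
    (hcont : ContinuousOn g (Icc s t)) (hd : ∀ u ∈ Ioo s t, HasDerivAt g (g' u) u)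
    (hsign : ∀ u ∈ Ioo s t, g' u ≤ 0) : AntitoneOn g (Icc s t) := by
  refine antitoneOn_of_deriv_nonpos (convex_Icc s t) hcont ?_ ?_
  · intro u hu
    rw [interior_Icc] at hu
    exact ((hd u hu).differentiableAt).differentiableWithinAt
  · intro u hu
    rw [interior_Icc] at hu
    rw [(hd u hu).deriv]
    exact hsign u hu

lemma strictMonoOn_of_deriv {g g' : ℝ → ℝ} {s t : ℝ}
    (hcont : ContinuousOn g (Icc s t)) (hd : ∀ u ∈ Ioo s t, HasDerivAt g (g' u) u)
    (hsign : ∀ u ∈ Ioo s t, 0 < g' u) : StrictMonoOn g (Icc s t) := by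
  refine strictMonoOn_of_deriv_pos (convex_Icc s t) hcont ?_
  intro u hu
  rw [interior_Icc] at hu
  rw [(hd u hu).deriv]
  exact hsign u hu

/-- derivative is nonnegative if the function is below its value on a left neighbourhood -/
lemma deriv_nonneg_of_left_le {z : ℝ → ℝ} {q t₀ c : ℝ} (h : HasDerivAt z q t₀) (hc : c < t₀)
    (hle : ∀ u ∈ Ioo c t₀, z u ≤ z t₀) : 0 ≤ q := by
  have htd : Tendsto (slope z t₀) (𝓝[<] t₀) (𝓝 q) := by
    refine (hasDerivAt_iff_tendsto_slope.mp h).mono_left (nhdsWithin_mono _ ?_)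
    intro u hu
    exact fun hmem => (ne_of_lt hu) (by simpa using hmem)
  refine ge_of_tendsto htd ?_
  filter_upwards [Ioo_mem_nhdsLT_of_mem (⟨hc, le_refl t₀⟩ : t₀ ∈ Ioc c t₀)] with u hu
  rw [slope_def_field]
  have h1 : z u - z t₀ ≤ 0 := by linarith [hle u hu]
  have h2 : u - t₀ < 0 := by linarith [hu.2]
  have := div_nonneg (neg_nonneg.mpr h1) (neg_nonneg.mpr h2.le)
  rwa [neg_div_neg_eq] at this

lemma deriv_nonpos_of_left_ge {z : ℝ → ℝ} {q t₀ c : ℝ} (h : HasDerivAt z q t₀) (hc : c < t₀)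
    (hge : ∀ u ∈ Ioo c t₀, z t₀ ≤ z u) : q ≤ 0 := by
  have h2 : (0:ℝ) ≤ -q := by
    refine deriv_nonneg_of_left_le (z := fun u => -z u) h.neg hc ?_
    intro u hu
    simp only [neg_le_neg_iff]
    exact hge u hu
  linarith

/-- one-sided (right) derivative at a boundary minimum is nonnegative -/
lemma derivWithin_nonneg_right {z : ℝ → ℝ} {q x₀ : ℝ}
    (h : HasDerivWithinAt z q (Ici x₀) x₀) (hle : ∀ u ∈ Ioi x₀, z x₀ ≤ z u) : 0 ≤ q := by
  have htd : Tendsto (slope z x₀) (𝓝[Ici x₀ \ {x₀}] x₀) (𝓝 q) :=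
    hasDerivWithinAt_iff_tendsto_slope.mp h
  rw [Ici_sdiff_left] at htd
  refine ge_of_tendsto htd ?_
  refine eventually_nhdsWithin_of_forall ?_
  intro u hu
  rw [slope_def_field]
  have h1 : 0 ≤ z u - z x₀ := by linarith [hle u hu]
  have h2 : 0 < u - x₀ := by simpa [sub_pos] using hu
  positivity

lemma deriv_zero_at_interior_min {z : ℝ → ℝ} {q t x₀ : ℝ} (h : HasDerivAt z q t) (hx : x₀ < t)
    (hnn : ∀ u ∈ Ioi x₀, z t ≤ z u) : q = 0 := by
  have hmin : IsLocalMin z t := by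
    filter_upwards [Ioi_mem_nhds hx] with u hu using hnn u hu
  rw [← h.deriv]
  exact hmin.deriv_eq_zero

/-- first crossing of the level `α` -/
lemma first_cross {z : ℝ → ℝ} {x₀ xb α : ℝ} (hx : x₀ ≤ xb)
    (hcont : ContinuousOn z (Icc x₀ xb)) (h0 : z x₀ < α) (h1 : α < z xb) :
    ∃ tc ∈ Ioc x₀ xb, z tc = α ∧ ∀ u ∈ Ico x₀ tc, z u < α := by
  set T := Icc x₀ xb ∩ z ⁻¹' (Ici α) with hT
  have hTclosed : IsClosed T := hcont.preimage_isClosed_of_isClosed isClosed_Icc isClosed_Ici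
  have hTne : T.Nonempty := ⟨xb, ⟨hx, le_refl _⟩, h1.le⟩
  have hTbdd : BddBelow T := ⟨x₀, fun u hu => hu.1.1⟩
  set tc := sInf T with htcdef
  have htcT : tc ∈ T := hTclosed.csInf_mem hTne hTbdd
  have htc_mem : tc ∈ Icc x₀ xb := htcT.1
  have htcz : α ≤ z tc := htcT.2
  have hbefore : ∀ u ∈ Ico x₀ tc, z u < α := by
    intro u hu
    by_contra hcon
    push_neg at hcon
    have huT : u ∈ T := ⟨⟨hu.1, le_trans hu.2.le htc_mem.2⟩, hcon⟩
    have := csInf_le hTbdd huT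
    linarith [hu.2]
  have hlt : x₀ < tc := by
    rcases eq_or_lt_of_le htc_mem.1 with h | h
    · exfalso; rw [← h] at htcz; linarith
    · exact h
  have heq : z tc = α := by
    have hIVT := intermediate_value_Icc htc_mem.1 (hcont.mono (Icc_subset_Icc_right htc_mem.2))
    have hα : α ∈ Icc (z x₀) (z tc) := ⟨h0.le, htcz⟩
    obtain ⟨u, hu, hzu⟩ := hIVT hα
    have huT : u ∈ T := ⟨⟨hu.1, le_trans hu.2 htc_mem.2⟩, hzu.ge⟩
    have h2 := csInf_le hTbdd huT
    have h3 : u = tc := le_antisymm hu.2 h2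
    rw [← h3, hzu]
  exact ⟨tc, ⟨hlt, htc_mem.2⟩, heq, hbefore⟩

/-- Once the solution is at level `≥ α` with positive slope, and the second derivative is
nonnegative above `α`, it stays above `α` with slope at least `s₀`. -/
lemma stay_above {p q r : ℝ → ℝ} {α t₁ s₀ : ℝ} (hs : 0 < s₀)
    (hqc : ContinuousOn q (Ici t₁))
    (hp : ∀ t ∈ Ici t₁, HasDerivAt p (q t) t)
    (hq : ∀ t ∈ Ici t₁, α ≤ p t → HasDerivAt q (r t) t ∧ 0 ≤ r t)
    (hp₁ : α ≤ p t₁) (hq₁ : s₀ ≤ q t₁) :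
    ∀ t ∈ Ici t₁, α ≤ p t ∧ s₀ ≤ q t ∧ α + s₀ * (t - t₁) ≤ p t := by
  have hpc : ContinuousOn p (Ici t₁) :=
    fun t ht => (hp t ht).continuousAt.continuousWithinAt
  -- main claim
  have hα : ∀ t ∈ Ici t₁, α ≤ p t := by
    by_contra hcon
    push_neg at hcon
    obtain ⟨tb, htb, htb2⟩ := hcon
    set T := {u : ℝ | t₁ ≤ u ∧ p u < α} with hT
    have hTne : T.Nonempty := ⟨tb, htb, htb2⟩
    have hTbdd : BddBelow T := ⟨t₁, fun u hu => hu.1⟩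
    set ts := sInf T with hts
    have hts1 : t₁ ≤ ts := le_csInf hTne fun u hu => hu.1
    -- p ts ≤ α
    have htsle : p ts ≤ α := by
      by_contra hgt
      push_neg at hgt
      have hcw : ContinuousWithinAt p (Ici t₁) ts := hpc ts hts1
      have hev : p ⁻¹' (Ioi α) ∈ 𝓝[Ici t₁] ts := hcw (Ioi_mem_nhds hgt)
      rw [mem_nhdsWithin] at hev
      obtain ⟨U, hUopen, hUmem, hUsub⟩ := hev
      obtain ⟨ε, hε, hball⟩ := Metric.isOpen_iff.mp hUopen ts hUmem
      obtain ⟨u, huT, hult⟩ := exists_lt_of_csInf_lt hTne (show sInf T < ts + ε by rw [← hts]; linarith)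
      have h1 : ts ≤ u := csInf_le hTbdd huT
      have h2 : u ∈ Metric.ball ts ε := by
        rw [Metric.mem_ball, Real.dist_eq, abs_lt]
        constructor <;> [linarith; linarith [hult]]
      have h3 : p u > α := hUsub ⟨hball h2, huT.1⟩
      linarith [huT.2]
    rcases eq_or_lt_of_le hts1 with heq | hlt
    · -- ts = t₁ : slope positive contradiction
      have hpt₁ : p t₁ = α := by
        rw [← heq] at htsle
        linarith
      have htd : Tendsto (slope p t₁) (𝓝[>] t₁) (𝓝 (q t₁)) := by
        refine (hasDerivAt_iff_tendsto_slope.mp (hp t₁ (mem_Ici.mpr (le_refl _)))).mono_left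
          (nhdsWithin_mono _ ?_)
        intro u hu
        simp only [mem_compl_iff, mem_singleton_iff]
        exact ne_of_gt hu
      have hq0 : (0:ℝ) < q t₁ := lt_of_lt_of_le hs hq₁
      have hev : ∀ᶠ u in 𝓝[>] t₁, 0 < slope p t₁ u := htd.eventually (eventually_gt_nhds hq0)
      rw [eventually_iff_exists_mem] at hev
      obtain ⟨V, hV, hVpos⟩ := hev
      obtain ⟨w, hw, hIoo⟩ := mem_nhdsGT_iff_exists_Ioo_subset.mp hV
      obtain ⟨u, huT, hu2⟩ := exists_lt_of_csInf_lt hTne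
        (show sInf T < w by rw [← hts, ← heq]; exact hw)
      have hne : u ≠ t₁ := by
        intro h
        rw [h] at huT
        have := huT.2
        linarith
      have hu1 : t₁ < u := lt_of_le_of_ne huT.1 (Ne.symm hne)
      have hupos := hVpos u (hIoo ⟨hu1, hu2⟩)
      rw [slope_def_field] at hupos
      have hden : (0:ℝ) < u - t₁ := by linarith
      have hnum := mul_pos hupos hden
      rw [div_mul_cancel₀ _ (ne_of_gt hden)] at hnum
      have := huT.2
      linarith
    · -- t₁ < ts
      have hbefore : ∀ u ∈ Ico t₁ ts, α ≤ p u := by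
        intro u hu
        by_contra hcon2
        push_neg at hcon2
        have : u ∈ T := ⟨hu.1, hcon2⟩
        have := csInf_le hTbdd this
        linarith [hu.2]
      have hqmono : MonotoneOn q (Icc t₁ ts) := by
        refine monoOn_of_deriv (g' := r) (hqc.mono (Icc_subset_Ici_self)) ?_ ?_
        · intro u hu
          exact (hq u (mem_Ici.mpr hu.1.le) (hbefore u ⟨hu.1.le, hu.2⟩)).1
        · intro u hu
          exact (hq u (mem_Ici.mpr hu.1.le) (hbefore u ⟨hu.1.le, hu.2⟩)).2
      have hqpos : ∀ u ∈ Ioo t₁ ts, 0 < q u := by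
        intro u hu
        have h1 := hqmono ⟨le_refl _, hlt.le⟩ ⟨hu.1.le, hu.2.le⟩ hu.1.le
        linarith
      have hpmono : StrictMonoOn p (Icc t₁ ts) := by
        refine strictMonoOn_of_deriv (hpc.mono (Icc_subset_Ici_self)) ?_ hqpos
        intro u hu
        exact hp u (mem_Ici.mpr hu.1.le)
      have := hpmono ⟨le_refl _, hlt.le⟩ ⟨hlt.le, le_refl _⟩ hlt
      linarith
  -- q part
  have hqge : ∀ t ∈ Ici t₁, s₀ ≤ q t := by
    intro t ht
    have hqmono : MonotoneOn q (Icc t₁ t) := by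
      refine monoOn_of_deriv (g' := r) (hqc.mono (Icc_subset_Ici_self)) ?_ ?_
      · intro u hu; exact (hq u (mem_Ici.mpr hu.1.le) (hα u (mem_Ici.mpr hu.1.le))).1
      · intro u hu; exact (hq u (mem_Ici.mpr hu.1.le) (hα u (mem_Ici.mpr hu.1.le))).2
    calc s₀ ≤ q t₁ := hq₁
      _ ≤ q t := hqmono ⟨le_refl _, ht⟩ ⟨ht, le_refl _⟩ ht
  refine fun t ht => ⟨hα t ht, hqge t ht, ?_⟩
  -- linear growth
  have hg : MonotoneOn (fun u => p u - s₀ * u) (Icc t₁ t) := by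
    refine monoOn_of_deriv (g' := fun u => q u - s₀) ((hpc.mono (Icc_subset_Ici_self)).sub
      (continuousOn_const.mul continuousOn_id)) ?_ ?_
    · intro u hu
      have h1 := (hp u (mem_Ici.mpr hu.1.le)).sub ((hasDerivAt_id u).const_mul s₀)
      exact h1.congr_deriv (by simp)
    · intro u hu
      have := hqge u (mem_Ici.mpr hu.1.le)
      linarith
  have h1 := hg ⟨le_refl _, ht⟩ ⟨ht, le_refl _⟩ ht
  simp only at h1
  nlinarith [hp₁]

end Helpers

section SysFacts

variable {x₀ b : ℝ} {Z Z₁ Z₂ : ℝ → ℝ × ℝ}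

lemma SysSol.contOn (h : SysSol f a x₀ Z) : ContinuousOn Z (Ici x₀) :=
  fun t ht => (h.1 t ht).continuousWithinAt

include hL hf in
lemma sysSol_fwd_eq (h1 : SysSol f a x₀ Z₁) (h2 : SysSol f a x₀ Z₂) {t₁ : ℝ}
    (hx : x₀ ≤ t₁) (heq : Z₁ t₁ = Z₂ t₁) : ∀ t, t₁ ≤ t → Z₁ t = Z₂ t := by
  intro t ht
  have key : EqOn Z₁ Z₂ (Icc t₁ t) := ODE_solution_unique (v := vf f a) (K := Kvnn f a L) (hvf_lip hL hf)
    (h1.contOn.mono (fun u hu => mem_Ici.mpr (le_trans hx hu.1)))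
    (fun u hu => ((h1.1 u (mem_Ici.mpr (le_trans hx hu.1))).mono
      (Ici_subset_Ici.mpr (le_trans hx hu.1))))
    (h2.contOn.mono (fun u hu => mem_Ici.mpr (le_trans hx hu.1)))
    (fun u hu => ((h2.1 u (mem_Ici.mpr (le_trans hx hu.1))).mono
      (Ici_subset_Ici.mpr (le_trans hx hu.1))))
    heq
  exact key ⟨ht, le_refl t⟩

include hL hf in
lemma sysSol_bwd_eq (h1 : SysSol f a x₀ Z₁) (h2 : SysSol f a x₀ Z₂) {t₁ t₂ : ℝ}
    (hx : x₀ ≤ t₁) (h12 : t₁ ≤ t₂) (heq : Z₁ t₂ = Z₂ t₂) : Z₁ t₁ = Z₂ t₁ := by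
  have key : EqOn Z₁ Z₂ (Icc t₁ t₂) := ODE_solution_unique_of_mem_Icc_left (v := vf f a) (K := Kvnn f a L)
    (s := fun _ => (univ : Set (ℝ × ℝ)))
    (fun t _ => (hvf_lip hL hf t).lipschitzOnWith)
    (h1.contOn.mono (fun u hu => mem_Ici.mpr (le_trans hx hu.1)))
    (fun u hu => (h1.2 u (mem_Ioi.mpr (lt_of_le_of_lt hx hu.1))).hasDerivWithinAt)
    (fun u _ => mem_univ _)
    (h2.contOn.mono (fun u hu => mem_Ici.mpr (le_trans hx hu.1)))
    (fun u hu => (h2.2 u (mem_Ioi.mpr (lt_of_le_of_lt hx hu.1))).hasDerivWithinAt)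
    (fun u _ => mem_univ _)
    heq
  exact key ⟨le_refl t₁, h12⟩

include hL hf in
lemma sysSol_zero : SysSol f a x₀ (fun _ => ((0:ℝ), (0:ℝ))) := by
  have hv0 : ∀ t : ℝ, vf f a t ((0:ℝ), (0:ℝ)) = ((0:ℝ), (0:ℝ)) := by
    intro t
    rw [vf]
    simp [Gf_zero hL hf t]
  constructor
  · intro t _
    rw [hv0]
    exact (hasDerivAt_const t _).hasDerivWithinAt
  · intro t _
    rw [hv0]
    exact hasDerivAt_const t _

include hL hf in
lemma sysSol_consta : SysSol f a x₀ (fun _ => (a, (0:ℝ))) := by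
  have hv0 : ∀ t : ℝ, vf f a t (a, (0:ℝ)) = ((0:ℝ), (0:ℝ)) := by
    intro t
    rw [vf]
    simp [Gf_a hL hf t]
  constructor
  · intro t _
    rw [hv0]
    exact (hasDerivAt_const t _).hasDerivWithinAt
  · intro t _
    rw [hv0]
    exact hasDerivAt_const t _

include hL hf in
lemma cont_dep (x₀ b b' : ℝ) {t : ℝ} (ht : x₀ ≤ t) :
    dist (Zb f a L x₀ b t) (Zb f a L x₀ b' t) ≤ |b - b'| * Real.exp (Kv f a L * (t - x₀)) := by
  have h1 := Zb_sysSol hL hf x₀ b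
  have h2 := Zb_sysSol hL hf x₀ b'
  have hco : (Kvnn f a L : ℝ) = Kv f a L := by
    have : (1:ℝ) ≤ Kv f a L := le_max_left _ _
    exact Real.coe_toNNReal _ (by linarith)
  have hinit : dist (Zb f a L x₀ b x₀) (Zb f a L x₀ b' x₀) ≤ |b - b'| := by
    rw [Zb_init, Zb_init, Prod.dist_eq]
    simp [Real.dist_eq]
  have key : ∀ u ∈ Icc x₀ t, dist (Zb f a L x₀ b u) (Zb f a L x₀ b' u)
      ≤ |b - b'| * Real.exp ((Kvnn f a L : ℝ) * (u - x₀)) :=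
    dist_le_of_trajectories_ODE (v := vf f a) (K := Kvnn f a L) (hvf_lip hL hf)
    (h1.contOn.mono (fun u hu => hu.1))
    (fun u hu => ((h1.1 u hu.1).mono (Ici_subset_Ici.mpr hu.1)))
    (h2.contOn.mono (fun u hu => hu.1))
    (fun u hu => ((h2.1 u hu.1).mono (Ici_subset_Ici.mpr hu.1)))
    hinit
  have key2 := key t ⟨ht, le_refl _⟩
  rwa [hco] at key2

end SysFacts

section Components

variable (f a L) in
def zbf (x₀ b : ℝ) : ℝ → ℝ := fun t => (Zb f a L x₀ b t).1

variable (f a L) in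
def qbf (x₀ b : ℝ) : ℝ → ℝ := fun t => (Zb f a L x₀ b t).2

variable {x₀ b : ℝ}

lemma zbf_x₀ : zbf f a L x₀ b x₀ = 0 := by rw [zbf, Zb_init]

lemma qbf_x₀ : qbf f a L x₀ b x₀ = b := by rw [qbf, Zb_init]

include hL hf in
lemma zbf_deriv {t : ℝ} (ht : x₀ < t) :
    HasDerivAt (zbf f a L x₀ b) (qbf f a L x₀ b t) t :=
  hasDerivAt_fst' ((Zb_sysSol hL hf x₀ b).2 t ht)

include hL hf in
lemma zbf_derivWithin {t : ℝ} (ht : x₀ ≤ t) :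
    HasDerivWithinAt (zbf f a L x₀ b) (qbf f a L x₀ b t) (Ici x₀) t :=
  hasDerivWithinAt_fst' ((Zb_sysSol hL hf x₀ b).1 t ht)

include hL hf in
lemma qbf_deriv {t : ℝ} (ht : x₀ < t) :
    HasDerivAt (qbf f a L x₀ b) (-Gf f a (zbf f a L x₀ b t) t) t :=
  hasDerivAt_snd' ((Zb_sysSol hL hf x₀ b).2 t ht)

include hL hf in
lemma qbf_derivWithin {t : ℝ} (ht : x₀ ≤ t) :
    HasDerivWithinAt (qbf f a L x₀ b) (-Gf f a (zbf f a L x₀ b t) t) (Ici x₀) t :=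
  hasDerivWithinAt_snd' ((Zb_sysSol hL hf x₀ b).1 t ht)

include hL hf in
lemma zbf_cont : ContinuousOn (zbf f a L x₀ b) (Ici x₀) :=
  fun t ht => ((zbf_derivWithin hL hf ht).continuousWithinAt)

include hL hf in
lemma qbf_cont : ContinuousOn (qbf f a L x₀ b) (Ici x₀) :=
  fun t ht => ((qbf_derivWithin hL hf ht).continuousWithinAt)

include hL hf in
lemma cont_dep_fst (x₀ b b' : ℝ) {t : ℝ} (ht : x₀ ≤ t) :
    |zbf f a L x₀ b t - zbf f a L x₀ b' t| ≤ |b - b'| * Real.exp (Kv f a L * (t - x₀)) := by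
  have h := cont_dep hL hf x₀ b b' ht
  refine le_trans ?_ h
  rw [Prod.dist_eq]
  rw [← Real.dist_eq]
  exact le_max_left _ _

end Components

section Shooting

variable {x₀ : ℝ}

include hL hf in
lemma qbf_lower {b t : ℝ} (ht : x₀ ≤ t) :
    ∀ u ∈ Icc x₀ t, b - CG f a L * (u - x₀) ≤ qbf f a L x₀ b u := by
  intro u hu
  have hmono : MonotoneOn (fun u => qbf f a L x₀ b u + CG f a L * u) (Icc x₀ t) := by
    refine monoOn_of_deriv (g' := fun u => -Gf f a (zbf f a L x₀ b u) u + CG f a L)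
      ((qbf_cont hL hf).mono Icc_subset_Ici_self |>.add
        (continuousOn_const.mul continuousOn_id)) ?_ ?_
    · intro u hu
      have h1 := (qbf_deriv hL hf (b := b) hu.1).add ((hasDerivAt_id u).const_mul (CG f a L))
      exact h1.congr_deriv (by simp)
    · intro u hu
      show 0 ≤ -Gf f a (zbf f a L x₀ b u) u + CG f a L
      have h1 := hGf_bdd hL hf (zbf f a L x₀ b u) u
      have h2 := abs_le.mp h1
      linarith [h2.2]
  have h1 := hmono ⟨le_refl _, ht⟩ ⟨hu.1, hu.2⟩ hu.1
  simp only [qbf_x₀] at h1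
  linarith

include hL hf in
lemma zbf_lower {b t : ℝ} (ht : x₀ ≤ t) :
    b * (t - x₀) - CG f a L / 2 * (t - x₀) ^ 2 ≤ zbf f a L x₀ b t := by
  have hmono : MonotoneOn
      (fun u => zbf f a L x₀ b u - b * (u - x₀) + CG f a L / 2 * (u - x₀) ^ 2) (Icc x₀ t) := by
    refine monoOn_of_deriv (g' := fun u => qbf f a L x₀ b u - b + CG f a L * (u - x₀))
      (((zbf_cont hL hf).mono Icc_subset_Ici_self |>.sub
        (continuousOn_const.mul (continuousOn_id.sub continuousOn_const))).add
        (continuousOn_const.mul ((continuousOn_id.sub continuousOn_const).pow 2))) ?_ ?_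
    · intro u hu
      have hd1 : HasDerivAt (fun u : ℝ => b * (u - x₀)) b u := by
        simpa using ((hasDerivAt_id u).sub_const x₀).const_mul b
      have hd2 : HasDerivAt (fun u : ℝ => CG f a L / 2 * (u - x₀) ^ 2)
          (CG f a L * (u - x₀)) u := by
        have h3 : HasDerivAt (fun u : ℝ => (u - x₀) ^ 2) (2 * (u - x₀)) u := by
          exact (((hasDerivAt_id u).sub_const x₀).pow 2).congr_deriv (by simp)
        have h4 := h3.const_mul (CG f a L / 2)
        refine h4.congr_deriv (Eq.symm ?_)
        ring
      have h5 := ((zbf_deriv hL hf (b := b) hu.1).sub hd1).add hd2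
      exact h5
    · intro u hu
      show 0 ≤ qbf f a L x₀ b u - b + CG f a L * (u - x₀)
      have h6 := qbf_lower hL hf (b := b) ht u ⟨hu.1.le, hu.2.le⟩
      linarith
  have h1 := hmono ⟨le_refl _, ht⟩ ⟨ht, le_refl _⟩ ht
  simp only [zbf_x₀, sub_self, mul_zero, zero_sub, ne_eq, OfNat.ofNat_ne_zero,
    not_false_eq_true, zero_pow, add_zero, neg_zero, mul_zero] at h1
  nlinarith [h1]

include hL hf in
lemma zbf_pos_small {b : ℝ} (hb : 0 < b) {t : ℝ} (ht1 : x₀ < t)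
    (ht2 : t ≤ x₀ + b / CG f a L) : 0 < zbf f a L x₀ b t := by
  have hCG1 : (1:ℝ) ≤ CG f a L := hCG_pos hL hf
  have hqpos : ∀ u ∈ Ioo x₀ t, 0 < qbf f a L x₀ b u := by
    intro u hu
    have h1 := qbf_lower hL hf (b := b) ht1.le u ⟨hu.1.le, hu.2.le⟩
    have h2 : u - x₀ < b / CG f a L := by
      have := hu.2
      linarith
    have h3 : CG f a L * (u - x₀) < b := by
      rw [lt_div_iff₀ (by linarith)] at h2
      linarith [h2]
    linarith
  have hmono : StrictMonoOn (zbf f a L x₀ b) (Icc x₀ t) := by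
    refine strictMonoOn_of_deriv ((zbf_cont hL hf).mono Icc_subset_Ici_self) ?_ hqpos
    intro u hu
    exact zbf_deriv hL hf hu.1
  have := hmono ⟨le_refl _, ht1.le⟩ ⟨ht1.le, le_refl _⟩ ht1
  rwa [zbf_x₀] at this

include hL hf in
lemma no_neg_of_cross {b : ℝ} (hb : 0 < b) {xb : ℝ} (hxb : x₀ < xb)
    (hpos : ∀ t ∈ Ioc x₀ xb, 0 < zbf f a L x₀ b t) (hcross : a < zbf f a L x₀ b xb) :
    ∀ t, x₀ < t → 0 < zbf f a L x₀ b t := by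
  have ha' := hf.zero_pos
  obtain ⟨tc, htc, htca, hbef⟩ := first_cross (z := zbf f a L x₀ b) hxb.le
    ((zbf_cont hL hf).mono Icc_subset_Ici_self) (by rw [zbf_x₀]; exact ha') hcross
  have hs₀ : 0 ≤ qbf f a L x₀ b tc := by
    refine deriv_nonneg_of_left_le (zbf_deriv hL hf htc.1) htc.1 ?_
    intro u hu
    rw [htca]
    exact (hbef u ⟨hu.1.le, hu.2⟩).le
  rcases eq_or_lt_of_le hs₀ with heq0 | hpos0
  · -- tangency: contradiction via backward uniqueness
    exfalso
    have hZtc : Zb f a L x₀ b tc = (a, 0) := by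
      have h1 : (Zb f a L x₀ b tc).1 = a := htca
      have h2 : (Zb f a L x₀ b tc).2 = 0 := heq0.symm
      exact Prod.ext h1 h2
    have hbwd := sysSol_bwd_eq hL hf (Zb_sysSol hL hf x₀ b) (sysSol_consta hL hf)
      (le_refl x₀) htc.1.le (by rw [hZtc])
    rw [Zb_init] at hbwd
    have := congrArg Prod.fst hbwd
    simp only at this
    linarith
  · -- positive slope: stays above a
    have hstay := stay_above (p := zbf f a L x₀ b) (q := qbf f a L x₀ b)
      (r := fun t => -Gf f a (zbf f a L x₀ b t) t) hpos0
      ((qbf_cont hL hf).mono (Ici_subset_Ici.mpr htc.1.le))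
      (fun t ht => zbf_deriv hL hf (lt_of_lt_of_le htc.1 ht))
      (fun t ht hat => ⟨qbf_deriv hL hf (lt_of_lt_of_le htc.1 ht), by
        show 0 ≤ -Gf f a (zbf f a L x₀ b t) t
        linarith [Gf_nonpos_of_ge hL hf hat t]⟩)
      htca.ge (le_refl _)
    intro t ht
    rcases lt_or_ge t tc with h | h
    · exact hpos t ⟨ht, le_trans h.le htc.2⟩
    · have := (hstay t h).1
      linarith

include hL hf in
lemma no_neg_large {b : ℝ} (hb : CG f a L + a + 1 < b) :
    ∀ t, x₀ < t → 0 < zbf f a L x₀ b t := by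
  have ha' := hf.zero_pos
  have hCG1 : (1:ℝ) ≤ CG f a L := hCG_pos hL hf
  have hb0 : 0 < b := by linarith
  refine no_neg_of_cross hL hf hb0 (show x₀ < x₀ + 1 by linarith) ?_ ?_
  · intro t ht
    refine zbf_pos_small hL hf hb0 ht.1 ?_
    have h1 : (1:ℝ) ≤ b / CG f a L := by
      rw [le_div_iff₀ (by linarith)]
      linarith
    linarith [ht.2]
  · have h1 := zbf_lower hL hf (b := b) (t := x₀ + 1) (by linarith)
    have h2 : (x₀ + 1 - x₀) = (1:ℝ) := by ring
    rw [h2] at h1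
    nlinarith

include hL hf in
lemma exists_Belem : ∃ b : ℝ, 0 < b ∧ ∃ t, x₀ < t ∧ zbf f a L x₀ b t < 0 := by
  have ha' := hf.zero_pos
  obtain ⟨m₁, hm₁, hm₁f⟩ := f_lower hL hf (c := a/2) (by linarith) (by linarith)
  set ω := Real.sqrt m₁ with hω
  have hωpos : 0 < ω := Real.sqrt_pos.mpr hm₁
  have hω2 : ω ^ 2 = m₁ := Real.sq_sqrt hm₁.le
  set x₁ := x₀ + Real.pi / ω with hx₁
  have hπ : 0 < Real.pi := Real.pi_pos
  have hx₁gt : x₀ < x₁ := by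
    rw [hx₁]
    have : 0 < Real.pi / ω := by positivity
    linarith
  set b₀ := a * ω / 8 with hb₀
  have hb₀pos : 0 < b₀ := by positivity
  refine ⟨b₀, hb₀pos, ?_⟩
  by_contra hcon
  push_neg at hcon
  -- hcon : ∀ t, x₀ < t → 0 ≤ zbf
  -- Step A : z ≤ a/2 on [x₀, x₁]
  have hA : ∀ t ∈ Icc x₀ x₁, zbf f a L x₀ b₀ t ≤ a / 2 := by
    by_contra hA'
    push_neg at hA'
    obtain ⟨tb, htb, htb2⟩ := hA'
    obtain ⟨tc, htc, htca, hbef⟩ := first_cross (z := zbf f a L x₀ b₀) htb.1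
      ((zbf_cont hL hf).mono Icc_subset_Ici_self)
      (by rw [zbf_x₀]; linarith) htb2
    have hz_nonneg : ∀ u ∈ Icc x₀ tc, 0 ≤ zbf f a L x₀ b₀ u := by
      intro u hu
      rcases eq_or_lt_of_le hu.1 with h | h
      · rw [← h, zbf_x₀]
      · exact (hcon u h)
    have hz_le : ∀ u ∈ Icc x₀ tc, zbf f a L x₀ b₀ u ≤ a / 2 := by
      intro u hu
      rcases eq_or_lt_of_le hu.2 with h | h
      · rw [h, htca]
      · exact (hbef u ⟨hu.1, h⟩).le
    -- q is decreasing on [x₀, tc], so q ≤ b₀ and z tc ≤ b₀ (tc - x₀)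
    have hqanti : AntitoneOn (qbf f a L x₀ b₀) (Icc x₀ tc) := by
      refine antiOn_of_deriv (g' := fun u => -Gf f a (zbf f a L x₀ b₀ u) u)
        ((qbf_cont hL hf).mono Icc_subset_Ici_self) ?_ ?_
      · intro u hu
        exact qbf_deriv hL hf hu.1
      · intro u hu
        show -Gf f a (zbf f a L x₀ b₀ u) u ≤ 0
        have h1 := Gf_nonneg_on hL hf (hz_nonneg u ⟨hu.1.le, hu.2.le⟩)
          (by linarith [hz_le u ⟨hu.1.le, hu.2.le⟩]) u
        linarith
    have hzmono : MonotoneOn (fun u => b₀ * u - zbf f a L x₀ b₀ u) (Icc x₀ tc) := by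
      refine monoOn_of_deriv (g' := fun u => b₀ - qbf f a L x₀ b₀ u)
        ((continuousOn_const.mul continuousOn_id).sub
          ((zbf_cont hL hf).mono Icc_subset_Ici_self)) ?_ ?_
      · intro u hu
        have h1 := ((hasDerivAt_id u).const_mul b₀).sub (zbf_deriv hL hf (b := b₀) hu.1)
        exact h1.congr_deriv (by simp)
      · intro u hu
        show 0 ≤ b₀ - qbf f a L x₀ b₀ u
        have h1 := hqanti ⟨le_refl _, htc.1.le⟩ ⟨hu.1.le, hu.2.le⟩ hu.1.le
        rw [qbf_x₀] at h1
        linarith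
    have h1 := hzmono ⟨le_refl _, htc.1.le⟩ ⟨htc.1.le, le_refl _⟩ htc.1.le
    simp only [zbf_x₀, sub_zero] at h1
    have h2 : zbf f a L x₀ b₀ tc ≤ b₀ * (tc - x₀) := by linarith
    have h3 : tc - x₀ ≤ Real.pi / ω := by
      have := htc.2.trans htb.2
      rw [hx₁] at this
      linarith
    have h4 : b₀ * (tc - x₀) ≤ b₀ * (Real.pi / ω) := by
      refine mul_le_mul_of_nonneg_left h3 hb₀pos.le
    have h5 : b₀ * (Real.pi / ω) = a * Real.pi / 8 := by
      rw [hb₀]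
      field_simp
    have hπ4 : Real.pi < 4 := by
      have := Real.pi_lt_d2
      linarith
    rw [htca] at h2
    nlinarith
  -- Step B : Sturm comparison
  set w := fun u : ℝ => Real.sin (ω * (u - x₀)) with hwdef
  set w' := fun u : ℝ => ω * Real.cos (ω * (u - x₀)) with hw'def
  have hinner : ∀ u : ℝ, HasDerivAt (fun u : ℝ => ω * (u - x₀)) ω u := by
    intro u
    simpa using ((hasDerivAt_id u).sub_const x₀).const_mul ω
  have hw : ∀ u : ℝ, HasDerivAt w (w' u) u := by
    intro u
    have h1 := (Real.hasDerivAt_sin (ω * (u - x₀))).comp u (hinner u)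
    have h2 : (Real.sin ∘ fun u : ℝ => ω * (u - x₀)) = w := rfl
    rw [h2] at h1
    refine h1.congr_deriv (Eq.symm ?_)
    rw [hw'def]
    ring
  have hωω : ω * ω = m₁ := by nlinarith [hω2]
  have hw' : ∀ u : ℝ, HasDerivAt w' (-m₁ * w u) u := by
    intro u
    have h1 := ((Real.hasDerivAt_cos (ω * (u - x₀))).comp u (hinner u)).const_mul ω
    have h2 : (fun u : ℝ => ω * (Real.cos ∘ fun u : ℝ => ω * (u - x₀)) u) = w' := rfl
    rw [h2] at h1
    refine h1.congr_deriv (Eq.symm ?_)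
    show -m₁ * Real.sin (ω * (u - x₀)) = ω * (-Real.sin (ω * (u - x₀)) * ω)
    linear_combination (Real.sin (ω * (u - x₀))) * hωω
  set W := fun u => qbf f a L x₀ b₀ u * w u - zbf f a L x₀ b₀ u * w' u with hWdef
  have hWanti : AntitoneOn W (Icc x₀ x₁) := by
    refine antiOn_of_deriv
      (g' := fun u => (-Gf f a (zbf f a L x₀ b₀ u) u * w u + qbf f a L x₀ b₀ u * w' u)
        - (qbf f a L x₀ b₀ u * w' u + zbf f a L x₀ b₀ u * (-m₁ * w u)))
      ?_ ?_ ?_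
    · refine (((qbf_cont hL hf).mono Icc_subset_Ici_self).mul ?_).sub
        (((zbf_cont hL hf).mono Icc_subset_Ici_self).mul ?_)
      · exact (Real.continuous_sin.comp
          (continuous_const.mul (continuous_id.sub continuous_const))).continuousOn
      · exact (continuous_const.mul (Real.continuous_cos.comp
          (continuous_const.mul (continuous_id.sub continuous_const)))).continuousOn
    · intro u hu
      exact ((qbf_deriv hL hf hu.1).mul (hw u)).sub ((zbf_deriv hL hf hu.1).mul (hw' u))
    · intro u hu
      show (-Gf f a (zbf f a L x₀ b₀ u) u * w u + qbf f a L x₀ b₀ u * w' u)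
        - (qbf f a L x₀ b₀ u * w' u + zbf f a L x₀ b₀ u * (-m₁ * w u)) ≤ 0
      have hzu0 : 0 ≤ zbf f a L x₀ b₀ u := hcon u hu.1
      have hzua : zbf f a L x₀ b₀ u ≤ a / 2 := hA u ⟨hu.1.le, hu.2.le⟩
      have hGf : Gf f a (zbf f a L x₀ b₀ u) u = zbf f a L x₀ b₀ u * f (zbf f a L x₀ b₀ u) u :=
        Gf_eq' hL hf hzu0 (by linarith) u
      have hfm : m₁ ≤ f (zbf f a L x₀ b₀ u) u := hm₁f u _ (by linarith)
      have hwnn : 0 ≤ w u := by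
        rw [hwdef]
        refine Real.sin_nonneg_of_nonneg_of_le_pi (by nlinarith [hu.1.le]) ?_
        have h1 : u - x₀ ≤ Real.pi / ω := by
          have := hu.2
          rw [hx₁] at this
          linarith
        rw [← le_div_iff₀' hωpos]
        linarith
      have key : -Gf f a (zbf f a L x₀ b₀ u) u * w u + m₁ * zbf f a L x₀ b₀ u * w u ≤ 0 := by
        rw [hGf]
        have h1 : m₁ * zbf f a L x₀ b₀ u ≤ zbf f a L x₀ b₀ u * f (zbf f a L x₀ b₀ u) u := by
          nlinarith
        nlinarith
      nlinarith [key]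
  have hWx₀ : W x₀ = 0 := by
    rw [hWdef]
    simp only [zbf_x₀, hwdef]
    simp
  have hWx₁ : W x₁ ≤ 0 := by
    have := hWanti ⟨le_refl _, hx₁gt.le⟩ ⟨hx₁gt.le, le_refl _⟩ hx₁gt.le
    rw [hWx₀] at this
    exact this
  have hθ : ω * (x₁ - x₀) = Real.pi := by
    rw [hx₁]
    field_simp
    ring
  have hWx₁eq : W x₁ = zbf f a L x₀ b₀ x₁ * ω := by
    rw [hWdef]
    simp only [hwdef, hw'def, hθ, Real.sin_pi, Real.cos_pi]
    ring
  have hzx₁ : zbf f a L x₀ b₀ x₁ = 0 := by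
    have h1 : zbf f a L x₀ b₀ x₁ * ω ≤ 0 := by rw [← hWx₁eq]; exact hWx₁
    have h2 : 0 ≤ zbf f a L x₀ b₀ x₁ := hcon x₁ hx₁gt
    nlinarith
  -- Step C : q x₁ = 0 and backward uniqueness
  have hqx₁ : qbf f a L x₀ b₀ x₁ = 0 := by
    refine deriv_zero_at_interior_min (zbf_deriv hL hf hx₁gt) hx₁gt ?_
    intro u hu
    rw [hzx₁]
    exact hcon u hu
  have hZx₁ : Zb f a L x₀ b₀ x₁ = ((0:ℝ), (0:ℝ)) := Prod.ext hzx₁ hqx₁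
  have hbwd := sysSol_bwd_eq hL hf (Zb_sysSol hL hf x₀ b₀) (sysSol_zero hL hf)
    (le_refl x₀) hx₁gt.le (by rw [hZx₁])
  rw [Zb_init] at hbwd
  have := congrArg Prod.snd hbwd
  simp only at this
  linarith

end Shooting

section Bstar

variable {x₀ : ℝ}

variable (f a L) in
def Bset (x₀ : ℝ) : Set ℝ := {b | 0 < b ∧ ∃ t, x₀ < t ∧ zbf f a L x₀ b t < 0}

include hL hf in
lemma zbf_cont_in_b (t : ℝ) (ht : x₀ ≤ t) : Continuous (fun b => zbf f a L x₀ b t) := by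
  set K : ℝ≥0 := Real.toNNReal (Real.exp (Kv f a L * (t - x₀))) with hK
  have hco : (K : ℝ) = Real.exp (Kv f a L * (t - x₀)) :=
    Real.coe_toNNReal _ (Real.exp_nonneg _)
  refine (LipschitzWith.of_dist_le_mul (K := K) ?_).continuous
  intro b b'
  rw [hco, Real.dist_eq, Real.dist_eq, mul_comm]
  exact cont_dep_fst hL hf x₀ b b' ht

include hL hf in
lemma Bset_open : IsOpen (Bset f a L x₀) := by
  have hrw : Bset f a L x₀ = Ioi 0 ∩ ⋃ t : ℝ, {b | x₀ < t ∧ zbf f a L x₀ b t < 0} := by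
    ext b
    simp only [Bset, mem_setOf_eq, mem_inter_iff, mem_Ioi, mem_iUnion]
  rw [hrw]
  refine isOpen_Ioi.inter (isOpen_iUnion fun t => ?_)
  by_cases hx : x₀ < t
  · have h2 : {b | x₀ < t ∧ zbf f a L x₀ b t < 0} = (fun b => zbf f a L x₀ b t) ⁻¹' Iio 0 := by
      ext b
      simp [hx]
    rw [h2]
    exact (zbf_cont_in_b hL hf t hx.le).isOpen_preimage _ isOpen_Iio
  · have h2 : {b | x₀ < t ∧ zbf f a L x₀ b t < 0} = ∅ := by
      ext b
      simp [hx]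
    rw [h2]
    exact isOpen_empty

include hL hf in
lemma Bset_bddAbove : BddAbove (Bset f a L x₀) := by
  refine ⟨CG f a L + a + 1, fun b hb => ?_⟩
  by_contra hcon
  push_neg at hcon
  obtain ⟨t, ht, htneg⟩ := hb.2
  have := no_neg_large hL hf (x₀ := x₀) hcon t ht
  linarith

include hL hf in
lemma Bset_nonempty : (Bset f a L x₀).Nonempty := by
  obtain ⟨b, hb1, hb2⟩ := exists_Belem hL hf (x₀ := x₀)
  exact ⟨b, hb1, hb2⟩

include hL hf in
lemma bstar_pos : 0 < sSup (Bset f a L x₀) := by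
  obtain ⟨b, hb⟩ := Bset_nonempty hL hf (x₀ := x₀)
  have h1 := le_csSup (Bset_bddAbove hL hf) hb
  linarith [hb.1]

include hL hf in
lemma bstar_notmem : sSup (Bset f a L x₀) ∉ Bset f a L x₀ := by
  intro hmem
  obtain ⟨ε, hε, hball⟩ := Metric.isOpen_iff.mp (Bset_open hL hf) _ hmem
  have h1 : sSup (Bset f a L x₀) + ε / 2 ∈ Bset f a L x₀ := by
    refine hball ?_
    rw [Metric.mem_ball, Real.dist_eq]
    rw [abs_of_pos (by linarith)]
    linarith
  have h2 := le_csSup (Bset_bddAbove hL hf) h1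
  linarith

include hL hf in
lemma zstar_nonneg : ∀ t, x₀ < t → 0 ≤ zbf f a L x₀ (sSup (Bset f a L x₀)) t := by
  intro t ht
  by_contra hcon
  push_neg at hcon
  exact bstar_notmem hL hf ⟨bstar_pos hL hf, t, ht, hcon⟩

include hL hf in
lemma pos_interior {b : ℝ} (hb : 0 < b) (hnn : ∀ t, x₀ < t → 0 ≤ zbf f a L x₀ b t) :
    ∀ t, x₀ < t → 0 < zbf f a L x₀ b t := by
  intro t ht
  rcases lt_or_eq_of_le (hnn t ht) with h | h
  · exact h
  · exfalso
    have hq : qbf f a L x₀ b t = 0 := by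
      refine deriv_zero_at_interior_min (zbf_deriv hL hf ht) ht ?_
      intro u hu
      rw [← h]
      exact hnn u hu
    have hZ : Zb f a L x₀ b t = ((0:ℝ), (0:ℝ)) := Prod.ext h.symm hq
    have hbwd := sysSol_bwd_eq hL hf (Zb_sysSol hL hf x₀ b) (sysSol_zero hL hf)
      (le_refl x₀) ht.le (by rw [hZ])
    rw [Zb_init] at hbwd
    have := congrArg Prod.snd hbwd
    simp only at this
    linarith

include hL hf in
lemma zstar_pos : ∀ t, x₀ < t → 0 < zbf f a L x₀ (sSup (Bset f a L x₀)) t :=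
  pos_interior hL hf (bstar_pos hL hf) (zstar_nonneg hL hf)

include hL hf in
lemma zstar_le_a : ∀ t, x₀ ≤ t → zbf f a L x₀ (sSup (Bset f a L x₀)) t ≤ a := by
  have ha' := hf.zero_pos
  have hCG1 : (1:ℝ) ≤ CG f a L := hCG_pos hL hf
  intro t ht
  by_contra hcon
  push_neg at hcon
  set bs := sSup (Bset f a L x₀) with hbs
  have hbspos : 0 < bs := bstar_pos hL hf
  have hxb : x₀ < t := by
    rcases eq_or_lt_of_le ht with h | h
    · exfalso
      rw [← h] at hcon
      rw [zbf_x₀] at hcon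
      linarith
    · exact h
  set xb := t
  set E := Real.exp (Kv f a L * (xb - x₀)) with hE
  have hEpos : 0 < E := Real.exp_pos _
  have hE1 : 1 ≤ E := by
    rw [hE]
    refine Real.one_le_exp ?_
    have h1 : (1:ℝ) ≤ Kv f a L := le_max_left _ _
    nlinarith
  set δ₁ := (bs / 2) / CG f a L with hδ₁
  have hδ₁pos : 0 < δ₁ := by positivity
  set m := min (x₀ + δ₁) xb with hm
  have hmgt : x₀ < m := lt_min (by linarith) hxb
  have hmle : m ≤ xb := min_le_right _ _
  -- minimum of zstar on [m, xb]
  obtain ⟨us, hus, husmin⟩ := isCompact_Icc.exists_isMinOn ⟨m, le_refl m, hmle⟩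
    ((zbf_cont hL hf (b := bs)).mono (fun u hu => mem_Ici.mpr (le_trans hmgt.le hu.1)))
  set ε₁ := zbf f a L x₀ bs us with hε₁
  have hε₁pos : 0 < ε₁ := zstar_pos hL hf us (lt_of_lt_of_le hmgt hus.1)
  set δ := min (bs / 2) (min (ε₁ / (2 * E)) ((zbf f a L x₀ bs xb - a) / (2 * E))) with hδ
  have hδpos : 0 < δ := by
    refine lt_min (by linarith) (lt_min (div_pos hε₁pos (by positivity))
      (div_pos (by linarith) (by positivity)))
  obtain ⟨b, hbB, hbgt⟩ := exists_lt_of_lt_csSup (Bset_nonempty hL hf)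
    (show bs - δ < sSup (Bset f a L x₀) by rw [← hbs]; linarith)
  have hble : b ≤ bs := le_csSup (Bset_bddAbove hL hf) hbB
  have hbhalf : bs / 2 ≤ b := by
    have h1 : δ ≤ bs / 2 := min_le_left _ _
    linarith
  have hdist : ∀ u ∈ Icc x₀ xb, |zbf f a L x₀ b u - zbf f a L x₀ bs u| ≤ δ * E := by
    intro u hu
    have h1 := cont_dep_fst hL hf x₀ b bs hu.1
    refine h1.trans ?_
    have h2 : |b - bs| ≤ δ := by
      rw [abs_of_nonpos (by linarith)]
      linarith
    have h3 : Real.exp (Kv f a L * (u - x₀)) ≤ E := by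
      rw [hE]
      refine Real.exp_le_exp.mpr ?_
      have h4 : (1:ℝ) ≤ Kv f a L := le_max_left _ _
      nlinarith [hu.2]
    nlinarith [Real.exp_nonneg (Kv f a L * (u - x₀)), abs_nonneg (b - bs)]
  have hδE1 : δ * E ≤ ε₁ / 2 := by
    have h1 : δ ≤ ε₁ / (2 * E) := le_trans (min_le_right _ _) (min_le_left _ _)
    rw [le_div_iff₀ (by positivity)] at h1
    nlinarith
  have hδE2 : δ * E ≤ (zbf f a L x₀ bs xb - a) / 2 := by
    have h1 : δ ≤ (zbf f a L x₀ bs xb - a) / (2 * E) :=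
      le_trans (min_le_right _ _) (min_le_right _ _)
    rw [le_div_iff₀ (by positivity)] at h1
    nlinarith
  -- b gives a positive solution crossing a : contradiction with b ∈ B
  have hpos : ∀ u ∈ Ioc x₀ xb, 0 < zbf f a L x₀ b u := by
    intro u hu
    rcases lt_or_ge u m with h | h
    · refine zbf_pos_small hL hf (by linarith) hu.1 ?_
      have h1 : u < x₀ + δ₁ := lt_of_lt_of_le h (min_le_left _ _)
      have h2 : δ₁ ≤ b / CG f a L := by
        rw [hδ₁, div_le_div_iff₀ (by linarith) (by linarith)]
        nlinarith
      linarith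
    · have h1 := husmin ⟨h, hu.2⟩
      have h2 := hdist u ⟨hu.1.le, hu.2⟩
      have h3 := abs_le.mp h2
      have h4 : ε₁ ≤ zbf f a L x₀ bs u := h1
      linarith [h3.1]
  have hcross : a < zbf f a L x₀ b xb := by
    have h2 := hdist xb ⟨hxb.le, le_refl _⟩
    have h3 := abs_le.mp h2
    linarith [h3.1]
  have hnoneg := no_neg_of_cross hL hf (by linarith : 0 < b) hxb hpos hcross
  obtain ⟨u, hu1, hu2⟩ := hbB.2
  linarith [hnoneg u hu1]

end Bstar

section Limit

variable {x₀ : ℝ}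

include hL hf in
lemma qbf_nonneg_of_bounded {b : ℝ} (hnn : ∀ t, x₀ ≤ t → 0 ≤ zbf f a L x₀ b t)
    (h0a : ∀ t, x₀ ≤ t → zbf f a L x₀ b t ≤ a) :
    ∀ t, x₀ ≤ t → 0 ≤ qbf f a L x₀ b t := by
  have hqanti : AntitoneOn (qbf f a L x₀ b) (Ici x₀) := by
    refine antitoneOn_of_deriv_nonpos (convex_Ici x₀) ((qbf_cont hL hf).mono le_rfl) ?_ ?_
    · intro u hu
      rw [interior_Ici] at hu
      exact (qbf_deriv hL hf hu).differentiableAt.differentiableWithinAt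
    · intro u hu
      rw [interior_Ici] at hu
      rw [(qbf_deriv hL hf hu).deriv]
      have h1 := Gf_nonneg_on hL hf (hnn u hu.le) (h0a u hu.le) u
      linarith
  intro t ht
  by_contra hcon
  push_neg at hcon
  set c := -qbf f a L x₀ b t with hc
  have hcpos : 0 < c := by rw [hc]; linarith
  set T := t + (zbf f a L x₀ b t + 1) / c with hT
  have hTgt : t < T := by
    rw [hT]
    have h1 : 0 < (zbf f a L x₀ b t + 1) / c := by
      have := hnn t ht
      positivity
    linarith
  have hanti2 : AntitoneOn (fun u => zbf f a L x₀ b u + c * u) (Icc t T) := by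
    refine antiOn_of_deriv (g' := fun u => qbf f a L x₀ b u + c)
      (((zbf_cont hL hf).mono (Icc_subset_Ici_self.trans (Ici_subset_Ici.mpr ht))).add
        (continuousOn_const.mul continuousOn_id)) ?_ ?_
    · intro u hu
      have h1 := (zbf_deriv hL hf (b := b) (lt_of_le_of_lt ht hu.1)).add
        ((hasDerivAt_id u).const_mul c)
      exact h1.congr_deriv (by simp)
    · intro u hu
      show qbf f a L x₀ b u + c ≤ 0
      have h1 := hqanti (mem_Ici.mpr ht) (mem_Ici.mpr (le_trans ht hu.1.le)) hu.1.le
      linarith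
  have h1 := hanti2 ⟨le_refl _, hTgt.le⟩ ⟨hTgt.le, le_refl _⟩ hTgt.le
  simp only at h1
  have h2 : zbf f a L x₀ b T ≤ zbf f a L x₀ b t + c * t - c * T := by linarith
  have h3 : c * T = c * t + (zbf f a L x₀ b t + 1) := by
    rw [hT]
    field_simp
  have h4 := hnn T (le_trans ht hTgt.le)
  nlinarith

include hL hf in
lemma tendsto_a {b : ℝ} (hb : 0 < b) (h0a : ∀ t, x₀ ≤ t → zbf f a L x₀ b t ≤ a)
    (hpos : ∀ t, x₀ < t → 0 < zbf f a L x₀ b t) :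
    Tendsto (zbf f a L x₀ b) atTop (𝓝 a) := by
  have ha' := hf.zero_pos
  have hnn : ∀ t, x₀ ≤ t → 0 ≤ zbf f a L x₀ b t := by
    intro t ht
    rcases eq_or_lt_of_le ht with h | h
    · rw [← h, zbf_x₀]
    · exact (hpos t h).le
  have hqnn := qbf_nonneg_of_bounded hL hf hnn h0a
  have hmono : MonotoneOn (zbf f a L x₀ b) (Ici x₀) := by
    refine monotoneOn_of_deriv_nonneg (convex_Ici x₀) ((zbf_cont hL hf).mono le_rfl) ?_ ?_
    · intro u hu
      rw [interior_Ici] at hu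
      exact (zbf_deriv hL hf hu).differentiableAt.differentiableWithinAt
    · intro u hu
      rw [interior_Ici] at hu
      rw [(zbf_deriv hL hf hu).deriv]
      exact hqnn u hu.le
  set g := fun t => zbf f a L x₀ b (max t x₀) with hg
  have hgmono : Monotone g := by
    intro s t hst
    exact hmono (mem_Ici.mpr (le_max_right _ _)) (mem_Ici.mpr (le_max_right _ _))
      (max_le_max hst (le_refl _))
  have hgbdd : BddAbove (range g) := by
    refine ⟨a, ?_⟩
    rintro y ⟨t, rfl⟩
    exact h0a _ (le_max_right _ _)
  have hgconv := tendsto_atTop_ciSup hgmono hgbdd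
  set l := ⨆ t, g t with hl
  have hzconv : Tendsto (zbf f a L x₀ b) atTop (𝓝 l) := by
    refine hgconv.congr' ?_
    filter_upwards [eventually_ge_atTop x₀] with t ht
    rw [hg]
    simp only [max_eq_left ht]
  have hl_le : l ≤ a := ciSup_le fun t => h0a _ (le_max_right _ _)
  have hl_pos : 0 < l := by
    have h1 : zbf f a L x₀ b (max (x₀ + 1) x₀) ≤ l := le_ciSup hgbdd (x₀ + 1)
    rw [max_eq_left (by linarith : x₀ ≤ x₀ + 1)] at h1
    linarith [hpos (x₀ + 1) (by linarith)]
  rcases eq_or_lt_of_le hl_le with heq | hlt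
  · rwa [heq] at hzconv
  · exfalso
    obtain ⟨m₂, hm₂, hm₂f⟩ := f_lower hL hf (c := (l + a) / 2) (by linarith) (by linarith)
    have hup : ∀ t, x₀ ≤ t → zbf f a L x₀ b t ≤ l := by
      intro t ht
      have h1 : zbf f a L x₀ b (max t x₀) ≤ l := le_ciSup hgbdd t
      rwa [max_eq_left ht] at h1
    obtain ⟨X, hX1, hX2⟩ : ∃ X, l / 2 < zbf f a L x₀ b X ∧ x₀ < X := by
      have h1 := (hzconv.eventually (eventually_gt_nhds (show l / 2 < l by linarith))).and
        (eventually_gt_atTop x₀)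
      obtain ⟨X, hX⟩ := h1.exists
      exact ⟨X, hX.1, hX.2⟩
    set κ := l / 2 * m₂ with hκ
    have hκpos : 0 < κ := by positivity
    set T := X + (qbf f a L x₀ b X + 1) / κ with hT
    have hTgt : X < T := by
      have h1 := hqnn X hX2.le
      have h2 : 0 < (qbf f a L x₀ b X + 1) / κ := by positivity
      rw [hT]; linarith
    have hanti2 : AntitoneOn (fun u => qbf f a L x₀ b u + κ * u) (Icc X T) := by
      refine antiOn_of_deriv (g' := fun u => -Gf f a (zbf f a L x₀ b u) u + κ)
        (((qbf_cont hL hf).mono (Icc_subset_Ici_self.trans (Ici_subset_Ici.mpr hX2.le))).add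
          (continuousOn_const.mul continuousOn_id)) ?_ ?_
      · intro u hu
        have h1 := (qbf_deriv hL hf (b := b) (lt_trans hX2 hu.1)).add
          ((hasDerivAt_id u).const_mul κ)
        exact h1.congr_deriv (by simp)
      · intro u hu
        show -Gf f a (zbf f a L x₀ b u) u + κ ≤ 0
        have hu_x₀ : x₀ ≤ u := le_trans hX2.le hu.1.le
        have hzl : l / 2 ≤ zbf f a L x₀ b u := by
          have := hmono (mem_Ici.mpr hX2.le) (mem_Ici.mpr hu_x₀) hu.1.le
          linarith
        have hzu : zbf f a L x₀ b u ≤ (l + a) / 2 := by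
          have := hup u hu_x₀
          linarith
        have hGeq : Gf f a (zbf f a L x₀ b u) u = zbf f a L x₀ b u * f (zbf f a L x₀ b u) u :=
          Gf_eq' hL hf (by linarith) (by linarith) u
        have hfm : m₂ ≤ f (zbf f a L x₀ b u) u := hm₂f u _ hzu
        have : κ ≤ Gf f a (zbf f a L x₀ b u) u := by
          rw [hGeq, hκ]
          have h0z : (0:ℝ) < l / 2 := by linarith
          nlinarith
        linarith
    have h1 := hanti2 ⟨le_refl _, hTgt.le⟩ ⟨hTgt.le, le_refl _⟩ hTgt.le
    simp only at h1
    have h3 : κ * T = κ * X + (qbf f a L x₀ b X + 1) := by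
      rw [hT]
      field_simp
    have h4 := hqnn T (le_trans hX2.le hTgt.le)
    nlinarith

include hL hf in
lemma no_two {b₁ b₂ : ℝ} (h12 : b₁ < b₂) (hb₁ : 0 < b₁)
    (h1a : ∀ t, x₀ ≤ t → zbf f a L x₀ b₁ t ≤ a) (h1pos : ∀ t, x₀ < t → 0 < zbf f a L x₀ b₁ t)
    (h2a : ∀ t, x₀ ≤ t → zbf f a L x₀ b₂ t ≤ a) (h2pos : ∀ t, x₀ < t → 0 < zbf f a L x₀ b₂ t) :
    False := by
  have ha' := hf.zero_pos
  set u₁ := zbf f a L x₀ b₁ with hu₁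
  set u₂ := zbf f a L x₀ b₂ with hu₂
  set q₁ := qbf f a L x₀ b₁ with hq₁
  set q₂ := qbf f a L x₀ b₂ with hq₂
  set d := fun t => u₂ t - u₁ t with hd
  have h1nn : ∀ t, x₀ ≤ t → 0 ≤ u₁ t := by
    intro t ht
    rcases eq_or_lt_of_le ht with h | h
    · rw [hu₁, ← h, zbf_x₀]
    · exact (h1pos t h).le
  have h2nn : ∀ t, x₀ ≤ t → 0 ≤ u₂ t := by
    intro t ht
    rcases eq_or_lt_of_le ht with h | h
    · rw [hu₂, ← h, zbf_x₀]
    · exact (h2pos t h).le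
  have hd_deriv : ∀ t, x₀ < t → HasDerivAt d (q₂ t - q₁ t) t := by
    intro t ht
    exact (zbf_deriv hL hf (b := b₂) ht).sub (zbf_deriv hL hf (b := b₁) ht)
  have hdx₀ : d x₀ = 0 := by
    rw [hd]
    simp only [hu₁, hu₂, zbf_x₀, sub_zero]
  -- d > 0 immediately to the right of x₀
  have hev : ∃ e, x₀ < e ∧ ∀ u ∈ Ioo x₀ e, 0 < d u := by
    have hdw : HasDerivWithinAt d (b₂ - b₁) (Ici x₀) x₀ := by
      have h1 := (zbf_derivWithin hL hf (b := b₂) (le_refl x₀)).sub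
        (zbf_derivWithin hL hf (b := b₁) (le_refl x₀))
      rw [qbf_x₀, qbf_x₀] at h1
      exact h1
    have htd : Tendsto (slope d x₀) (𝓝[>] x₀) (𝓝 (b₂ - b₁)) := by
      have h1 := hasDerivWithinAt_iff_tendsto_slope.mp hdw
      rwa [Ici_sdiff_left] at h1
    have hev1 : ∀ᶠ u in 𝓝[>] x₀, 0 < slope d x₀ u :=
      htd.eventually (eventually_gt_nhds (by linarith))
    rw [eventually_iff_exists_mem] at hev1
    obtain ⟨V, hV, hVpos⟩ := hev1
    obtain ⟨e, he, hIoo⟩ := mem_nhdsGT_iff_exists_Ioo_subset.mp hV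
    refine ⟨e, he, fun u hu => ?_⟩
    have h1 := hVpos u (hIoo hu)
    rw [slope_def_field, hdx₀, sub_zero] at h1
    have h2 : 0 < u - x₀ := by linarith [hu.1]
    have := mul_pos h1 h2
    rwa [div_mul_cancel₀ _ (ne_of_gt h2)] at this
  obtain ⟨e, he, hepos⟩ := hev
  -- the Wronskian
  set W := fun t => q₂ t * u₁ t - q₁ t * u₂ t with hW
  have hWx₀ : W x₀ = 0 := by
    rw [hW]
    simp only [hu₁, hu₂, zbf_x₀, mul_zero, sub_zero]
  have hWderiv : ∀ t, x₀ < t → HasDerivAt W (u₁ t * u₂ t * (f (u₁ t) t - f (u₂ t) t)) t := by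
    intro t ht
    have h := ((qbf_deriv hL hf (b := b₂) ht).mul (zbf_deriv hL hf (b := b₁) ht)).sub
      ((qbf_deriv hL hf (b := b₁) ht).mul (zbf_deriv hL hf (b := b₂) ht))
    have e1 : Gf f a (u₁ t) t = u₁ t * f (u₁ t) t :=
      Gf_eq' hL hf (h1nn t ht.le) (h1a t ht.le) t
    have e2 : Gf f a (u₂ t) t = u₂ t * f (u₂ t) t :=
      Gf_eq' hL hf (h2nn t ht.le) (h2a t ht.le) t
    refine h.congr_deriv (Eq.symm ?_)
    rw [e1, e2]
    ring
  have hWcont : ContinuousOn W (Ici x₀) := by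
    rw [hW]
    exact ((qbf_cont hL hf).mul (zbf_cont hL hf)).sub ((qbf_cont hL hf).mul (zbf_cont hL hf))
  -- d > 0 on all of (x₀, ∞)
  have hd_pos : ∀ t, x₀ < t → 0 < d t := by
    by_contra hcon
    push_neg at hcon
    obtain ⟨tb, htb, htb2⟩ := hcon
    have htbe : e ≤ tb := by
      by_contra h
      push_neg at h
      exact absurd (hepos tb ⟨htb, h⟩) (not_lt.mpr htb2)
    set T := {u : ℝ | e ≤ u ∧ d u ≤ 0} with hT
    have hdcont : ContinuousOn d (Ici e) := by
      refine ContinuousOn.sub ?_ ?_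
      · exact (zbf_cont hL hf).mono (Ici_subset_Ici.mpr he.le)
      · exact (zbf_cont hL hf).mono (Ici_subset_Ici.mpr he.le)
    have hTclosed : IsClosed T := by
      have h1 : T = Ici e ∩ d ⁻¹' (Iic 0) := by
        ext u
        simp [hT]
      rw [h1]
      exact hdcont.preimage_isClosed_of_isClosed isClosed_Ici isClosed_Iic
    have hTne : T.Nonempty := ⟨tb, htbe, htb2⟩
    have hTbdd : BddBelow T := ⟨e, fun u hu => hu.1⟩
    set t₁ := sInf T with ht₁
    have ht₁T : t₁ ∈ T := hTclosed.csInf_mem hTne hTbdd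
    have ht₁e : e ≤ t₁ := ht₁T.1
    have ht₁x₀ : x₀ < t₁ := lt_of_lt_of_le he ht₁e
    have hbefore : ∀ u ∈ Ioo x₀ t₁, 0 < d u := by
      intro u hu
      rcases lt_or_ge u e with h | h
      · exact hepos u ⟨hu.1, h⟩
      · by_contra h2
        push_neg at h2
        have : u ∈ T := ⟨h, h2⟩
        have := csInf_le hTbdd this
        linarith [hu.2]
    have hdt₁ : d t₁ = 0 := by
      refine le_antisymm ht₁T.2 ?_
      have hc : ContinuousAt d t₁ := (hd_deriv t₁ ht₁x₀).continuousAt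
      have htd : Tendsto d (𝓝[<] t₁) (𝓝 (d t₁)) := hc.continuousWithinAt.tendsto
      refine ge_of_tendsto htd ?_
      filter_upwards [Ioo_mem_nhdsLT_of_mem (⟨ht₁x₀, le_refl _⟩ : t₁ ∈ Ioc x₀ t₁)] with u hu
      exact (hbefore u hu).le
    have hWmono : StrictMonoOn W (Icc x₀ t₁) := by
      refine strictMonoOn_of_deriv
        (g' := fun u => u₁ u * u₂ u * (f (u₁ u) u - f (u₂ u) u))
        (hWcont.mono Icc_subset_Ici_self) ?_ ?_
      · intro u hu
        exact hWderiv u hu.1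
      · intro u hu
        have h1 : 0 < u₁ u := h1pos u hu.1
        have h2 : 0 < u₂ u := h2pos u hu.1
        have h3 : u₁ u < u₂ u := by
          have := hbefore u hu
          rw [hd] at this
          simp only at this
          linarith
        have h4 : f (u₂ u) u < f (u₁ u) u := hf.strict_anti u h3
        have : 0 < f (u₁ u) u - f (u₂ u) u := by linarith
        positivity
    have hWt₁pos : 0 < W t₁ := by
      have := hWmono ⟨le_refl _, ht₁x₀.le⟩ ⟨ht₁x₀.le, le_refl _⟩ ht₁x₀
      rwa [hWx₀] at this
    have hWt₁nonpos : W t₁ ≤ 0 := by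
      have hqd : q₂ t₁ - q₁ t₁ ≤ 0 := by
        refine deriv_nonpos_of_left_ge (hd_deriv t₁ ht₁x₀) ht₁x₀ ?_
        intro u hu
        rw [hdt₁]
        exact (hbefore u hu).le
      have hu12 : u₂ t₁ = u₁ t₁ := by
        have := hdt₁
        rw [hd] at this
        simp only at this
        linarith
      have hWt₁ : W t₁ = u₁ t₁ * (q₂ t₁ - q₁ t₁) := by
        rw [hW]
        simp only [hu12]
        ring
      rw [hWt₁]
      exact mul_nonpos_of_nonneg_of_nonpos (h1nn t₁ ht₁x₀.le) hqd
    linarith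
  -- now the ratio argument
  set x₁ := x₀ + 1 with hx₁
  have hx₁gt : x₀ < x₁ := by rw [hx₁]; linarith
  have hWx₁pos : 0 < W x₁ := by
    have hWmono : StrictMonoOn W (Icc x₀ x₁) := by
      refine strictMonoOn_of_deriv
        (g' := fun u => u₁ u * u₂ u * (f (u₁ u) u - f (u₂ u) u))
        (hWcont.mono Icc_subset_Ici_self) ?_ ?_
      · intro u hu
        exact hWderiv u hu.1
      · intro u hu
        have h1 : 0 < u₁ u := h1pos u hu.1
        have h2 : 0 < u₂ u := h2pos u hu.1
        have h3 : u₁ u < u₂ u := by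
          have := hd_pos u hu.1
          rw [hd] at this
          simp only at this
          linarith
        have h4 : f (u₂ u) u < f (u₁ u) u := hf.strict_anti u h3
        have : 0 < f (u₁ u) u - f (u₂ u) u := by linarith
        positivity
    have := hWmono ⟨le_refl _, hx₁gt.le⟩ ⟨hx₁gt.le, le_refl _⟩ hx₁gt
    rwa [hWx₀] at this
  have hWge : ∀ t, x₁ ≤ t → 0 < W t := by
    intro t ht
    rcases eq_or_lt_of_le ht with h | h
    · rwa [← h]
    · have hWmono2 : MonotoneOn W (Icc x₁ t) := by
        refine monoOn_of_deriv
          (g' := fun u => u₁ u * u₂ u * (f (u₁ u) u - f (u₂ u) u))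
          (hWcont.mono (Icc_subset_Ici_self.trans (Ici_subset_Ici.mpr hx₁gt.le))) ?_ ?_
        · intro u hu
          exact hWderiv u (lt_trans hx₁gt hu.1)
        · intro u hu
          have hux₀ : x₀ < u := lt_trans hx₁gt hu.1
          have h1 : 0 ≤ u₁ u := (h1pos u hux₀).le
          have h2 : 0 ≤ u₂ u := (h2pos u hux₀).le
          have h3 : u₁ u ≤ u₂ u := by
            have := hd_pos u hux₀
            rw [hd] at this
            simp only at this
            linarith
          have h4 : f (u₂ u) u ≤ f (u₁ u) u := (hf.strict_anti u).antitone h3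
          have : 0 ≤ f (u₁ u) u - f (u₂ u) u := by linarith
          positivity
      have := hWmono2 ⟨le_refl _, ht⟩ ⟨ht, le_refl _⟩ ht
      linarith
  -- ratio
  set ρ := fun t => u₂ t / u₁ t with hρ
  have hρmono : ∀ t, x₁ ≤ t → ρ x₁ ≤ ρ t := by
    intro t ht
    rcases eq_or_lt_of_le ht with h | h
    · rw [h]
    · have hmono : MonotoneOn ρ (Icc x₁ t) := by
        refine monoOn_of_deriv (g' := fun u => (W u) / (u₁ u) ^ 2) ?_ ?_ ?_
        · refine ContinuousOn.div ((zbf_cont hL hf).mono (Icc_subset_Ici_self.trans (Ici_subset_Ici.mpr hx₁gt.le)))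
            ((zbf_cont hL hf).mono (Icc_subset_Ici_self.trans (Ici_subset_Ici.mpr hx₁gt.le))) ?_
          intro u hu
          exact ne_of_gt (h1pos u (lt_of_lt_of_le hx₁gt hu.1))
        · intro u hu
          have hux₀ : x₀ < u := lt_trans hx₁gt hu.1
          have h1 := (zbf_deriv hL hf (b := b₂) hux₀).div (zbf_deriv hL hf (b := b₁) hux₀)
            (ne_of_gt (h1pos u hux₀))
          refine h1.congr_deriv (Eq.symm ?_)
          rw [hW]
          ring
        · intro u hu
          have hux₀ : x₀ < u := lt_trans hx₁gt hu.1
          have h1 := hWge u hu.1.le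
          have h2 := h1pos u hux₀
          positivity
      exact hmono ⟨le_refl _, ht⟩ ⟨ht, le_refl _⟩ ht
  set ρ₁ := ρ x₁ with hρ₁
  have hρ₁gt : 1 < ρ₁ := by
    rw [hρ₁, hρ]
    have h1 : 0 < u₁ x₁ := h1pos x₁ hx₁gt
    have h2 : u₁ x₁ < u₂ x₁ := by
      have := hd_pos x₁ hx₁gt
      rw [hd] at this
      simp only at this
      linarith
    rw [lt_div_iff₀ h1]
    linarith
  have hub : ∀ t, x₁ ≤ t → ρ₁ * u₁ t ≤ a := by
    intro t ht
    have h1 := hρmono t ht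
    have h2 : 0 < u₁ t := h1pos t (lt_of_lt_of_le hx₁gt ht)
    have h3 : ρ₁ * u₁ t ≤ u₂ t := by
      have h4 : ρ₁ ≤ u₂ t / u₁ t := h1
      rw [le_div_iff₀ h2] at h4
      linarith
    exact h3.trans (h2a t (le_trans hx₁gt.le ht))
  have hconv : Tendsto (fun t => ρ₁ * u₁ t) atTop (𝓝 (ρ₁ * a)) :=
    (tendsto_a hL hf hb₁ h1a h1pos).const_mul ρ₁
  have hev2 : ∀ᶠ t in atTop, ρ₁ * u₁ t ≤ a := by
    filter_upwards [eventually_ge_atTop x₁] with t ht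
    exact hub t ht
  have hle := le_of_tendsto hconv hev2
  nlinarith

end Limit

section PairUnique

variable {x₀ : ℝ} {P Q : ℝ → ℝ × ℝ}

include hL hf in
lemma pair_fwd_eq {t₁ : ℝ} (hx : x₀ ≤ t₁)
    (hd : ∀ t ∈ Ici t₁, HasDerivWithinAt P (vf f a t (P t)) (Ici t₁) t)
    (hQ : SysSol f a x₀ Q) (heq : P t₁ = Q t₁) :
    ∀ t, t₁ ≤ t → P t = Q t := by
  intro t ht
  have hPc : ContinuousOn P (Ici t₁) := fun u hu => (hd u hu).continuousWithinAt
  have key : EqOn P Q (Icc t₁ t) := ODE_solution_unique (v := vf f a) (K := Kvnn f a L)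
    (hvf_lip hL hf)
    (hPc.mono (fun u hu => hu.1))
    (fun u hu => ((hd u hu.1).mono (Ici_subset_Ici.mpr hu.1)))
    (hQ.contOn.mono (fun u hu => mem_Ici.mpr (le_trans hx hu.1)))
    (fun u hu => ((hQ.1 u (mem_Ici.mpr (le_trans hx hu.1))).mono
      (Ici_subset_Ici.mpr (le_trans hx hu.1))))
    heq
  exact key ⟨ht, le_refl t⟩

include hL hf in
lemma pair_bwd_eq {t₂ : ℝ} (hx : x₀ ≤ t₂)
    (hPc : ContinuousOn P (Icc x₀ t₂))
    (hd : ∀ t ∈ Ioc x₀ t₂, HasDerivAt P (vf f a t (P t)) t)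
    (hQ : SysSol f a x₀ Q) (heq : P t₂ = Q t₂) :
    EqOn P Q (Icc x₀ t₂) := by
  refine ODE_solution_unique_of_mem_Icc_left (v := vf f a) (K := Kvnn f a L)
    (s := fun _ => (univ : Set (ℝ × ℝ)))
    (fun t _ => (hvf_lip hL hf t).lipschitzOnWith)
    hPc
    (fun u hu => (hd u hu).hasDerivWithinAt)
    (fun u _ => mem_univ _)
    (hQ.contOn.mono (fun u hu => hu.1))
    (fun u hu => (hQ.2 u hu.1).hasDerivWithinAt)
    (fun u _ => mem_univ _)
    heq

end PairUnique

section Existence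

variable {x₀ : ℝ}

include hL hf in
/-- the constructed solution, packaged: the function, its `derivWithin` identities and
properties. -/
lemma zstar_pkg :
    ∃ b : ℝ, 0 < b ∧
      zbf f a L x₀ b x₀ = 0 ∧
      (∀ t, x₀ < t → 0 < zbf f a L x₀ b t) ∧
      (∀ t, x₀ ≤ t → zbf f a L x₀ b t ≤ a) ∧
      derivWithin (zbf f a L x₀ b) (Ici x₀) x₀ = b := by
  refine ⟨sSup (Bset f a L x₀), bstar_pos hL hf, zbf_x₀, zstar_pos hL hf, zstar_le_a hL hf, ?_⟩
  have h1 := (zbf_derivWithin hL hf (b := sSup (Bset f a L x₀)) (le_refl x₀)).derivWithin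
    (uniqueDiffOn_Ici x₀ x₀ (le_refl x₀))
  rw [h1, qbf_x₀]

end Existence

section Uniqueness

variable {x₀ : ℝ}

include hL hf in
lemma exists_bw {w : ℝ → ℝ} (hw : IsDuLin x₀ f w) :
    ∃ bw : ℝ, 0 < bw ∧ (∀ t, x₀ ≤ t → w t = zbf f a L x₀ bw t) ∧
      (∀ t, x₀ ≤ t → zbf f a L x₀ bw t ≤ a) ∧
      (∀ t, x₀ < t → 0 < zbf f a L x₀ bw t) := by
  have ha' := hf.zero_pos
  set qw := derivWithin w (Ici x₀) with hqw
  set q2w := derivWithin qw (Ici x₀) with hq2w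
  have hw_c : ContinuousOn w (Ici x₀) := fun t ht => (hw.diff1 t ht).continuousWithinAt
  have hqw_c : ContinuousOn qw (Ici x₀) := fun t ht => (hw.diff2 t ht).continuousWithinAt
  have hq2w_c : ContinuousOn q2w (Ici x₀) := hw.cont2
  have hw_d : ∀ t, x₀ < t → HasDerivAt w (qw t) t := by
    intro t ht
    have h1 := ((hw.diff1 t (le_of_lt ht)).differentiableAt (Ici_mem_nhds ht)).hasDerivAt
    rw [hqw, derivWithin_of_mem_nhds (Ici_mem_nhds ht)]
    exact h1
  have hqw_d : ∀ t, x₀ < t → HasDerivAt qw (q2w t) t := by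
    intro t ht
    have h1 := ((hw.diff2 t (le_of_lt ht)).differentiableAt (Ici_mem_nhds ht)).hasDerivAt
    rw [hq2w, derivWithin_of_mem_nhds (Ici_mem_nhds ht)]
    exact h1
  have hode : ∀ t, x₀ < t → q2w t = -(w t * f (w t) t) := by
    intro t ht
    have h1 := hw.ode t ht
    rw [← hq2w] at h1
    linarith
  have hwnn : ∀ t, x₀ ≤ t → 0 ≤ w t := fun t ht => hw.nonneg t ht
  obtain ⟨M, hM⟩ := hw.bdd
  -- step 1 : w ≤ a on Ici
  have hwlea : ∀ t, x₀ ≤ t → w t ≤ a := by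
    by_contra hcon
    push_neg at hcon
    obtain ⟨xb, hxb1, hxb2⟩ := hcon
    have hxbgt : x₀ < xb := by
      rcases eq_or_lt_of_le hxb1 with h | h
      · exfalso
        rw [← h, hw.zero_at] at hxb2
        linarith
      · exact h
    obtain ⟨tc, htc, htca, hbef⟩ := first_cross hxbgt.le (hw_c.mono Icc_subset_Ici_self)
      (by rw [hw.zero_at]; linarith) hxb2
    have hs₀ : 0 ≤ qw tc := by
      refine deriv_nonneg_of_left_le (hw_d tc htc.1) htc.1 ?_
      intro u hu
      rw [htca]
      exact (hbef u ⟨hu.1.le, hu.2⟩).le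
    rcases eq_or_lt_of_le hs₀ with h0 | hpos0
    · -- tangency : backward uniqueness against the constant solution a
      have hP : EqOn (fun t => (w t, qw t)) (fun _ => (a, (0:ℝ))) (Icc x₀ tc) := by
        refine pair_bwd_eq hL hf htc.1.le
          ((hw_c.mono Icc_subset_Ici_self).prodMk (hqw_c.mono Icc_subset_Ici_self)) ?_
          (sysSol_consta hL hf) ?_
        · intro t ht2
          have hd := (hw_d t ht2.1).prodMk (hqw_d t ht2.1)
          have hwt_le : w t ≤ a := by
            rcases eq_or_lt_of_le ht2.2 with h | h
            · rw [h, htca]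
            · exact (hbef t ⟨ht2.1.le, h⟩).le
          have hval : vf f a t (w t, qw t) = (qw t, q2w t) := by
            rw [vf]
            simp only
            rw [Gf_eq' hL hf (hwnn t ht2.1.le) hwt_le t, hode t ht2.1]
          rw [hval]
          exact hd
        · show ((w tc, qw tc) : ℝ × ℝ) = (a, 0)
          exact Prod.ext htca h0.symm
      have h1 := hP ⟨le_refl x₀, htc.1.le⟩
      have h2 : w x₀ = a := congrArg Prod.fst h1
      rw [hw.zero_at] at h2
      linarith
    · -- positive slope : w grows without bound
      have hstay := stay_above (p := w) (q := qw) (r := q2w) hpos0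
        (hqw_c.mono (Ici_subset_Ici.mpr htc.1.le))
        (fun t ht2 => hw_d t (lt_of_lt_of_le htc.1 ht2))
        (fun t ht2 hat => ⟨hqw_d t (lt_of_lt_of_le htc.1 ht2), by
          rw [hode t (lt_of_lt_of_le htc.1 ht2)]
          have h1 : f (w t) t ≤ 0 := by
            rcases eq_or_lt_of_le hat with h | h
            · rw [← h, hf.zero_root t]
            · have h2 : f (w t) t < f a t := hf.strict_anti t h
              rw [hf.zero_root t] at h2
              exact h2.le
          nlinarith [lt_of_lt_of_le ha' hat]⟩)
        htca.ge (le_refl _)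
      have hMpos : 0 ≤ M := le_trans (abs_nonneg _) (hM x₀ (le_refl x₀))
      set T := tc + (M + 1) / qw tc with hT
      have hTge : tc ≤ T := by
        rw [hT]
        have h1 : 0 < (M + 1) / qw tc := by positivity
        linarith
      have h1 := (hstay T hTge).2.2
      have h2 : qw tc * (T - tc) = M + 1 := by
        rw [hT]
        field_simp
        ring
      have h3 := abs_le.mp (hM T (le_trans htc.1.le hTge))
      nlinarith
  -- step 2 : the value of the second derivative at x₀
  have hq2w_x₀ : q2w x₀ = 0 := by
    have hT1 : Tendsto q2w (𝓝[>] x₀) (𝓝 (q2w x₀)) :=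
      ((hq2w_c x₀ (le_refl x₀)).tendsto).mono_left (nhdsWithin_mono _ Ioi_subset_Ici_self)
    have hc : ContinuousWithinAt (fun t => -(w t * f (w t) t)) (Ici x₀) x₀ := by
      refine ContinuousWithinAt.neg (ContinuousWithinAt.mul (hw_c x₀ (le_refl x₀)) ?_)
      have hfc : Continuous (uncurry f) := hf.smooth.continuous
      exact (hfc.comp_continuousOn (hw_c.prodMk continuousOn_id)) x₀ (le_refl x₀)
    have hT2 : Tendsto (fun t => -(w t * f (w t) t)) (𝓝[>] x₀)
        (𝓝 (-(w x₀ * f (w x₀) x₀))) :=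
      hc.tendsto.mono_left (nhdsWithin_mono _ Ioi_subset_Ici_self)
    have hEq : q2w =ᶠ[𝓝[>] x₀] fun t => -(w t * f (w t) t) :=
      eventually_nhdsWithin_of_forall fun u hu => hode u hu
    have h2 := tendsto_nhds_unique (hT1.congr' hEq) hT2
    rw [hw.zero_at] at h2
    simpa using h2
  -- the pair solves the system globally on Ici
  have hval2 : ∀ t, x₀ < t → vf f a t (w t, qw t) = (qw t, q2w t) := by
    intro t ht
    rw [vf]
    simp only
    rw [Gf_eq' hL hf (hwnn t ht.le) (hwlea t ht.le) t, hode t ht]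
  have hP_glob : ∀ t ∈ Ici x₀,
      HasDerivWithinAt (fun t => (w t, qw t)) (vf f a t (w t, qw t)) (Ici x₀) t := by
    intro t ht
    rcases eq_or_lt_of_le (mem_Ici.mp ht) with h | h
    · have hd := ((hw.diff1 x₀ (le_refl x₀)).hasDerivWithinAt).prodMk
        ((hw.diff2 x₀ (le_refl x₀)).hasDerivWithinAt)
      have hval : vf f a x₀ (w x₀, qw x₀) = (qw x₀, q2w x₀) := by
        rw [vf]
        simp only
        rw [hw.zero_at, Gf_zero hL hf x₀, hq2w_x₀]
        simp
      rw [← h, hval]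
      exact hd
    · rw [hval2 t h]
      exact ((hw_d t h).prodMk (hqw_d t h)).hasDerivWithinAt
  -- step 3 : w > 0 on Ioi
  have hwpos : ∀ t, x₀ < t → 0 < w t := by
    intro t ht
    rcases (hwnn t ht.le).lt_or_eq with h | h
    · exact h
    · exfalso
      have hqt : qw t = 0 := by
        refine deriv_zero_at_interior_min (hw_d t ht) ht ?_
        intro u hu
        rw [← h]
        exact hwnn u hu.le
      have hPt : ((w t, qw t) : ℝ × ℝ) = ((0:ℝ), (0:ℝ)) := Prod.ext h.symm hqt
      -- forward : w ≡ 0 on [t, ∞)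
      have hfwd := pair_fwd_eq hL hf (P := fun t => (w t, qw t)) (t₁ := t) ht.le
        (fun u hu => (hP_glob u (le_trans ht.le hu)).mono (Ici_subset_Ici.mpr ht.le))
        (sysSol_zero hL hf) hPt
      -- backward : w ≡ 0 on [x₀, t]
      have hbwd := pair_bwd_eq hL hf (P := fun t => (w t, qw t)) ht.le
        ((hw_c.mono Icc_subset_Ici_self).prodMk (hqw_c.mono Icc_subset_Ici_self))
        (fun u hu => by rw [hval2 u hu.1]; exact (hw_d u hu.1).prodMk (hqw_d u hu.1))
        (sysSol_zero hL hf) hPt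
      obtain ⟨x, hx, hne⟩ := hw.nonzero
      rcases le_or_gt x t with hxle | hxgt
      · have := hbwd ⟨hx, hxle⟩
        exact hne (congrArg Prod.fst this)
      · have := hfwd x hxgt.le
        exact hne (congrArg Prod.fst this)
  -- step 4 : the initial slope
  set bw := qw x₀ with hbw
  have hbw_nn : 0 ≤ bw := by
    refine derivWithin_nonneg_right (z := w) (hw.diff1 x₀ (le_refl x₀)).hasDerivWithinAt ?_
    intro u hu
    rw [hw.zero_at]
    exact hwnn u hu.le
  have hbw_pos : 0 < bw := by
    rcases hbw_nn.lt_or_eq with h | h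
    · exact h
    · exfalso
      have hPx₀ : ((w x₀, qw x₀) : ℝ × ℝ) = ((0:ℝ), (0:ℝ)) := Prod.ext hw.zero_at h.symm
      have hfwd := pair_fwd_eq hL hf (P := fun t => (w t, qw t)) (t₁ := x₀) (le_refl x₀)
        hP_glob (sysSol_zero hL hf) hPx₀
      obtain ⟨x, hx, hne⟩ := hw.nonzero
      exact hne (congrArg Prod.fst (hfwd x hx))
  -- step 5 : identification with the shooting solution
  have hident : ∀ t, x₀ ≤ t → w t = zbf f a L x₀ bw t := by
    have h1 := pair_fwd_eq hL hf (P := fun t => (w t, qw t)) (t₁ := x₀) (le_refl x₀)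
      hP_glob (Zb_sysSol hL hf x₀ bw)
      (by show ((w x₀, qw x₀) : ℝ × ℝ) = Zb f a L x₀ bw x₀
          rw [Zb_init]
          exact Prod.ext hw.zero_at rfl)
    intro t ht
    exact congrArg Prod.fst (h1 t ht)
  refine ⟨bw, hbw_pos, hident, ?_, ?_⟩
  · intro t ht
    rw [← hident t ht]
    exact hwlea t ht
  · intro t ht
    rw [← hident t ht.le]
    exact hwpos t ht

end Uniqueness

end DL

/-- the periodic Du–Lin problem: existence, uniqueness (among bounded
nonnegative nonzero `C²` solutions), positivity on `(x₀, ∞)`, and positivity of the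
right derivative at `x₀`. -/
theorem duLin_exists_unique
    (L : ℝ) (hL : 0 < L) (x₀ : ℝ)
    (f : ℝ → ℝ → ℝ) (a : ℝ) (hf : Admissible L f a) :
    ∃ z : ℝ → ℝ, IsDuLin x₀ f z ∧
      (∀ w : ℝ → ℝ, IsDuLin x₀ f w → Set.EqOn w z (Ici x₀)) ∧
      (∀ x : ℝ, x₀ < x → 0 < z x) ∧
      0 < derivWithin z (Ici x₀) x₀ := by
  obtain ⟨bs, hbs_pos, hz0, hzpos, hzlea, hderiv⟩ := DL.zstar_pkg hL hf (x₀ := x₀)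
  have ha' := hf.zero_pos
  refine ⟨DL.zbf f a L x₀ bs, ?_, ?_, fun x hx => hzpos x hx, by rw [hderiv]; exact hbs_pos⟩
  case refine_1 =>
    have hnonneg : ∀ x ∈ Ici x₀, 0 ≤ DL.zbf f a L x₀ bs x := by
      intro x hx
      rcases eq_or_lt_of_le (mem_Ici.mp hx) with h | h
      · rw [← h, hz0]
      · exact (hzpos x h).le
    have hzW : ∀ t ∈ Ici x₀, derivWithin (DL.zbf f a L x₀ bs) (Ici x₀) t
        = DL.qbf f a L x₀ bs t :=
      fun t ht => (DL.zbf_derivWithin hL hf ht).derivWithin (uniqueDiffOn_Ici x₀ t ht)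
    have hqW : ∀ t ∈ Ici x₀, derivWithin (DL.qbf f a L x₀ bs) (Ici x₀) t
        = -(DL.Gf f a (DL.zbf f a L x₀ bs t) t) :=
      fun t ht => (DL.qbf_derivWithin hL hf ht).derivWithin (uniqueDiffOn_Ici x₀ t ht)
    have hd2eq : ∀ t ∈ Ici x₀,
        derivWithin (derivWithin (DL.zbf f a L x₀ bs) (Ici x₀)) (Ici x₀) t
          = -(DL.Gf f a (DL.zbf f a L x₀ bs t) t) := by
      intro t ht
      rw [derivWithin_congr (fun u hu => hzW u hu) (hzW t ht)]
      exact hqW t ht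
    have hGfeq : ∀ t ∈ Ici x₀, DL.Gf f a (DL.zbf f a L x₀ bs t) t
        = DL.zbf f a L x₀ bs t * f (DL.zbf f a L x₀ bs t) t :=
      fun t ht => DL.Gf_eq' hL hf (hnonneg t ht) (hzlea t ht) t
    refine ⟨?_, ?_, ?_, ?_, hnonneg, ?_, hz0, ?_⟩
    · exact fun x hx => (DL.zbf_derivWithin hL hf hx).differentiableWithinAt
    · intro x hx
      exact ((DL.qbf_derivWithin hL hf hx).differentiableWithinAt).congr
        (fun u hu => hzW u hu) (hzW x hx)
    · have hcontG : ContinuousOn (fun t => -(DL.Gf f a (DL.zbf f a L x₀ bs t) t))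
          (Ici x₀) := by
        refine ContinuousOn.neg ?_
        exact (DL.hGf_cont hL hf).comp_continuousOn
          ((DL.zbf_cont hL hf).prodMk continuousOn_id)
      exact hcontG.congr hd2eq
    · exact ⟨a, fun x hx => abs_le.mpr ⟨by linarith [hnonneg x hx], hzlea x hx⟩⟩
    · exact ⟨x₀ + 1, mem_Ici.mpr (by linarith), (hzpos (x₀ + 1) (by linarith)).ne'⟩
    · intro x hx
      rw [hd2eq x (mem_Ici.mpr (le_of_lt (mem_Ioi.mp hx))), neg_neg]
      exact hGfeq x (mem_Ici.mpr (le_of_lt (mem_Ioi.mp hx)))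
  case refine_2 =>
    intro w hw
    obtain ⟨bw, hbw_pos, hident, hwlea', hwpos'⟩ := DL.exists_bw hL hf hw
    have hbweq : bw = bs := by
      by_contra hne
      rcases lt_or_gt_of_ne hne with h | h
      · exact DL.no_two hL hf h hbw_pos hwlea' hwpos' hzlea hzpos
      · exact DL.no_two hL hf h hbs_pos hzlea hzpos hwlea' hwpos'
    intro t ht
    rw [hident t ht, hbweq]
end
end

section
/- Fix a period L > 0, parameters d, α > 0, admissible nonlinearities f₁, f₂ with zeros a₁, a₂, and a point x_e ∈ ℝ. Let z₊ := z_{x_e, h} be the Du–Lin solution for h(u,x) := f₁(u/α, 2x_e − x) (admissible with zero α a₁), and let z₋ := z_{x_e, g_d} be the Du–Lin solution for g_d(u,x) := (1/d) f₂(u/d, x) (admissible with zero d a₂). If z₊'(x_e) = z₋'(x_e), then the function e defined by e(y) = z₊(2x_e − y) for y < x_e and e(y) = −z₋(y) for y ≥ x_e is a segregated stationary equilibrium; in particular e ∈ C²(ℝ) and −e'' = η(e, ·) on all of ℝ. -/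
open MeasureTheory Set Filter Topology Function

noncomputable section

open Metric

namespace IsDuLin
variable {x₀ : ℝ} {f : ℝ → ℝ → ℝ} {z : ℝ → ℝ}

theorem contOn (hz : IsDuLin x₀ f z) : ContinuousOn z (Ici x₀) :=
  fun x hx => (hz.diff1 x hx).continuousWithinAt

theorem cont1 (hz : IsDuLin x₀ f z) :
    ContinuousOn (derivWithin z (Ici x₀)) (Ici x₀) :=
  fun x hx => (hz.diff2 x hx).continuousWithinAt

theorem hasDerivAt' (hz : IsDuLin x₀ f z) {x : ℝ} (hx : x₀ < x) :
    HasDerivAt z (derivWithin z (Ici x₀) x) x :=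
  (hz.diff1 x hx.le).hasDerivWithinAt.hasDerivAt (Ici_mem_nhds hx)

theorem hasDerivAt1 (hz : IsDuLin x₀ f z) {x : ℝ} (hx : x₀ < x) :
    HasDerivAt (derivWithin z (Ici x₀))
      (derivWithin (derivWithin z (Ici x₀)) (Ici x₀) x) x :=
  (hz.diff2 x hx.le).hasDerivWithinAt.hasDerivAt (Ici_mem_nhds hx)

theorem start_hasDerivWithinAt (hz : IsDuLin x₀ f z) :
    HasDerivWithinAt z (derivWithin z (Ici x₀) x₀) (Ici x₀) x₀ :=
  (hz.diff1 x₀ self_mem_Ici).hasDerivWithinAt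

theorem start_hasDerivWithinAt1 (hz : IsDuLin x₀ f z) :
    HasDerivWithinAt (derivWithin z (Ici x₀))
      (derivWithin (derivWithin z (Ici x₀)) (Ici x₀) x₀) (Ici x₀) x₀ :=
  (hz.diff2 x₀ self_mem_Ici).hasDerivWithinAt

theorem z2_eq (hz : IsDuLin x₀ f z) (hfc : Continuous (uncurry f)) :
    ∀ x ∈ Ici x₀, derivWithin (derivWithin z (Ici x₀)) (Ici x₀) x
      = -(z x * f (z x) x) := by
  intro x hx
  rcases eq_or_lt_of_le (mem_Ici.mp hx) with h | h
  · subst h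
    set x := x₀
    have hzc : ContinuousWithinAt z (Ici x) x := hz.contOn x self_mem_Ici
    have hrhs : ContinuousWithinAt (fun y => -(z y * f (z y) y)) (Ici x) x := by
      have hfz : ContinuousWithinAt (fun y => f (z y) y) (Ici x) x :=
        hfc.continuousAt.comp_continuousWithinAt (hzc.prodMk continuousWithinAt_id)
      exact (hzc.mul hfz).neg
    have h1 : Tendsto (derivWithin (derivWithin z (Ici x)) (Ici x))
        (𝓝[>] x) (𝓝 (derivWithin (derivWithin z (Ici x)) (Ici x) x)) :=
      (hz.cont2 x self_mem_Ici).mono Ioi_subset_Ici_self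
    have h2 : Tendsto (fun y => -(z y * f (z y) y)) (𝓝[>] x)
        (𝓝 (-(z x * f (z x) x))) := hrhs.mono Ioi_subset_Ici_self
    have heq : ∀ᶠ y in 𝓝[>] x,
        derivWithin (derivWithin z (Ici x)) (Ici x) y = -(z y * f (z y) y) := by
      filter_upwards [self_mem_nhdsWithin] with y hy
      have := hz.ode y hy
      linarith [hz.ode y hy]
    exact tendsto_nhds_unique (h1.congr' heq) h2
  · have := hz.ode x h
    linarith

theorem start_deriv_nonneg (hz : IsDuLin x₀ f z) :
    0 ≤ derivWithin z (Ici x₀) x₀ := by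
  have h := hz.start_hasDerivWithinAt
  rw [hasDerivWithinAt_iff_tendsto_slope, Ici_sdiff_left] at h
  refine ge_of_tendsto h ?_
  filter_upwards [self_mem_nhdsWithin] with x hx
  have hx3 : x₀ < x := hx
  rw [slope_def_field, hz.zero_at]
  have h0 : 0 ≤ z x := hz.nonneg x hx3.le
  have h1 : (0:ℝ) < x - x₀ := sub_pos.mpr hx3
  have : (0:ℝ) ≤ z x - 0 := by linarith
  exact div_nonneg this h1.le


theorem pos_Ioi (hz : IsDuLin x₀ f z) (hf : ContDiff ℝ 1 (uncurry f))
    {p : ℝ} (hp : x₀ < p) : 0 < z p := by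
  rcases (hz.nonneg p hp.le).lt_or_eq with h | h
  · exact h
  exfalso
  -- z p = 0; show z vanishes identically on [x₀, b] for every b > p
  have hzp : z p = 0 := h.symm
  set z1 := derivWithin z (Ici x₀) with hz1def
  have hz1p : z1 p = 0 := by
    have hmin : IsLocalMin z p := by
      filter_upwards [Ici_mem_nhds hp] with y hy
      rw [hzp]; exact hz.nonneg y hy
    exact hmin.hasDerivAt_eq_zero (hz.hasDerivAt' hp)
  have key : ∀ b, p < b → ∀ x ∈ Icc x₀ b, z x = 0 := by
    intro b hb
    have hx₀b : x₀ ≤ b := (hp.trans hb).le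
    -- trajectory
    set F : ℝ → ℝ × ℝ := fun t => (z t, z1 t) with hFdef
    have hFcont : ContinuousOn F (Icc x₀ b) :=
      ((hz.contOn.mono (Icc_subset_Ici_self)).prodMk
        (hz.cont1.mono (Icc_subset_Ici_self)))
    obtain ⟨R, hR⟩ := (isCompact_Icc : IsCompact (Icc x₀ b)).exists_bound_of_continuousOn hFcont
    have hR0 : (0:ℝ) ≤ R := le_trans (norm_nonneg _) (hR x₀ ⟨le_refl _, hx₀b⟩)
    -- clamped time
    set τ : ℝ → ℝ := fun t => max x₀ (min t b) with hτdef
    have hτmem : ∀ t, τ t ∈ Icc x₀ b := fun t =>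
      ⟨le_max_left _ _, max_le hx₀b (min_le_right _ _)⟩
    have hτeq : ∀ t ∈ Icc x₀ b, τ t = t := by
      intro t ht
      simp only [hτdef]
      rw [min_eq_left ht.2, max_eq_right ht.1]
    -- the vector field
    set V : ℝ × (ℝ × ℝ) → ℝ × ℝ := fun q => (q.2.2, -(q.2.1 * f q.2.1 (τ q.1))) with hVdef
    set W : ℝ × (ℝ × ℝ) → ℝ × ℝ := fun q => (q.2.2, -(q.2.1 * f q.2.1 q.1)) with hWdef
    have hWc : ContDiff ℝ 1 W := by
      apply ContDiff.prodMk
      · exact (contDiff_snd.snd)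
      · have : ContDiff ℝ 1 (fun q : ℝ × ℝ × ℝ => f q.2.1 q.1) := by
          exact hf.comp (contDiff_snd.fst.prodMk contDiff_fst)
        exact ((contDiff_snd.fst.mul this)).neg
    -- Lipschitz bound on compact convex set
    set Q : Set (ℝ × (ℝ × ℝ)) := Icc x₀ b ×ˢ closedBall 0 (R + 1) with hQdef
    have hQconv : Convex ℝ Q := (convex_Icc _ _).prod (convex_closedBall _ _)
    have hQcomp : IsCompact Q := isCompact_Icc.prod (isCompact_closedBall _ _)
    obtain ⟨C, hC⟩ := hQcomp.exists_bound_of_continuousOn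
      ((hWc.continuous_fderiv one_ne_zero).continuousOn (s := Q))
    set K : NNReal := ⟨max C 0, le_max_right _ _⟩ with hKdef
    have hWlip : LipschitzOnWith K W Q := by
      apply hQconv.lipschitzOnWith_of_nnnorm_fderiv_le
        (fun q _ => (hWc.differentiable one_ne_zero).differentiableAt)
      intro q hq
      rw [← NNReal.coe_le_coe, coe_nnnorm]
      exact le_trans (hC q hq) (le_max_left C 0)
    -- the time-dependent field is Lipschitz uniformly
    have hv : ∀ t, LipschitzOnWith K (fun pq => V (t, pq)) (closedBall 0 (R + 1)) := by
      intro t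
      rw [lipschitzOnWith_iff_dist_le_mul]
      intro u hu v' hv'
      have h1 : V (t, u) = W (τ t, u) := rfl
      have h2 : V (t, v') = W (τ t, v') := rfl
      rw [h1, h2]
      have := (lipschitzOnWith_iff_dist_le_mul.mp hWlip) (x := (τ t, u)) (y := (τ t, v'))
        ⟨hτmem t, hu⟩ ⟨hτmem t, hv'⟩
      calc dist (W (τ t, u)) (W (τ t, v')) ≤ K * dist ((τ t, u)) ((τ t, v')) := this
        _ = K * dist u v' := by rw [Prod.dist_eq, dist_self, max_eq_right dist_nonneg]
    -- F solves the ODE with field V on Ioo x₀ b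
    have hF' : ∀ t ∈ Ioo x₀ b, HasDerivAt F (V (t, F t)) t := by
      intro t ht
      have h1 : HasDerivAt z (z1 t) t := hz.hasDerivAt' ht.1
      have h2 : HasDerivAt z1 (derivWithin z1 (Ici x₀) t) t := hz.hasDerivAt1 ht.1
      have h3 : derivWithin z1 (Ici x₀) t = -(z t * f (z t) t) :=
        hz.z2_eq hf.continuous t ht.1.le
      have h4 : V (t, F t) = (z1 t, -(z t * f (z t) t)) := by
        simp only [hVdef, hFdef, hτeq t ⟨ht.1.le, ht.2.le⟩]
      rw [h4]
      exact h1.prodMk (h3 ▸ h2)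
    have hFs : ∀ t ∈ Ioo x₀ b, F t ∈ closedBall (0 : ℝ × ℝ) (R + 1) := by
      intro t ht
      rw [mem_closedBall_zero_iff]
      exact le_trans (hR t ⟨ht.1.le, ht.2.le⟩) (by linarith)
    -- the zero solution
    have hG' : ∀ t ∈ Ioo x₀ b, HasDerivAt (fun _ : ℝ => ((0:ℝ), (0:ℝ))) (V (t, (0, 0))) t := by
      intro t ht
      have : V (t, ((0:ℝ), (0:ℝ))) = (0, 0) := by simp [hVdef]
      rw [this]
      exact hasDerivAt_const _ _
    have hkey := ODE_solution_unique_of_mem_Icc (v := fun t pq => V (t, pq))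
      (s := fun _ => closedBall 0 (R + 1)) (K := K) (fun t _ => hv t)
      (t₀ := p) ⟨hp, hb⟩ hFcont hF' hFs
      (continuousOn_const) hG'
      (fun t _ => by simpa using hR0.trans (by linarith : R ≤ R + 1))
      (by simp [hFdef, hzp, hz1p])
    intro x hx
    have h5 := hkey hx
    have : z x = 0 ∧ z1 x = 0 := by
      simpa [hFdef, Prod.ext_iff] using h5
    exact this.1
  obtain ⟨x, hx, hne⟩ := hz.nonzero
  have hb : p < max x p + 1 := by
    have := le_max_right x p; linarith
  exact hne (key (max x p + 1) hb x ⟨hx, by have := le_max_left x p; linarith⟩)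


theorem slide (hz : IsDuLin x₀ f z) {L : ℝ} (hL : 0 < L)
    (hf : ContDiff ℝ 1 (uncurry f))
    (hper : ∀ u x, f u (x + L) = f u x)
    (hanti : ∀ x, StrictAnti (fun u => f u x)) :
    ∀ x, x₀ ≤ x → z x ≤ z (x + L) := by
  by_contra hcon
  push_neg at hcon
  obtain ⟨c, hc, hclt⟩ := hcon
  set z1 := derivWithin z (Ici x₀) with hz1def
  set w : ℝ → ℝ := fun x => z (x + L) with hwdef
  set w1 : ℝ → ℝ := fun x => z1 (x + L) with hw1def
  -- basic facts
  have hmemL : ∀ x, x₀ ≤ x → x₀ < x + L := fun x hx => by linarith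
  have hwpos : ∀ x, x₀ ≤ x → 0 < w x := fun x hx =>
    hz.pos_Ioi hf (hmemL x hx)
  have hzpos : ∀ x, x₀ < x → 0 < z x := fun x hx => hz.pos_Ioi hf hx
  have hwderiv : ∀ x, x₀ ≤ x → HasDerivAt w (w1 x) x := by
    intro x hx
    have h1 := (hz.hasDerivAt' (hmemL x hx)).comp x ((hasDerivAt_id x).add_const L)
    simpa [Function.comp_def] using h1
  have hw1deriv : ∀ x, x₀ ≤ x →
      HasDerivAt w1 (derivWithin z1 (Ici x₀) (x + L)) x := by
    intro x hx
    have h1 := (hz.hasDerivAt1 (hmemL x hx)).comp x ((hasDerivAt_id x).add_const L)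
    simpa [Function.comp_def] using h1
  have hz2 : ∀ x ∈ Ici x₀, derivWithin z1 (Ici x₀) x = -(z x * f (z x) x) :=
    hz.z2_eq hf.continuous
  have hwcont : ContinuousOn w (Ici x₀) := by
    intro x hx
    exact ((hwderiv x hx).continuousAt).continuousWithinAt
  have hw1cont : ContinuousOn w1 (Ici x₀) := by
    intro x hx
    exact ((hw1deriv x hx).continuousAt).continuousWithinAt
  -- the set A and its sup a
  have hcx₀ : x₀ < c := by
    rcases eq_or_lt_of_le hc with h | h
    · exfalso
      rw [← h, hz.zero_at] at hclt
      linarith [hz.nonneg (x₀ + L) (by linarith : x₀ ≤ x₀ + L)]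
    · exact h
  set g : ℝ → ℝ := fun x => z x - w x with hgdef
  have hgcont : ContinuousOn g (Ici x₀) := hz.contOn.sub hwcont
  set A : Set ℝ := Icc x₀ c ∩ g ⁻¹' (Iic 0) with hAdef
  have hAne : A.Nonempty := by
    refine ⟨x₀, ⟨le_refl _, hc⟩, ?_⟩
    simp only [mem_preimage, mem_Iic, hgdef]
    rw [hz.zero_at]
    have := (hwpos x₀ (le_refl _)).le
    linarith
  have hAbdd : BddAbove A := ⟨c, fun x hx => hx.1.2⟩
  have hAclosed : IsClosed A :=
    (hgcont.mono (Icc_subset_Ici_self)).preimage_isClosed_of_isClosed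
      isClosed_Icc isClosed_Iic
  set a := sSup A with hadef
  have haA : a ∈ A := hAclosed.csSup_mem hAne hAbdd
  have hax₀ : x₀ ≤ a := haA.1.1
  have hale : a ≤ c := haA.1.2
  have hgapos : z a ≤ w a := by simpa [hgdef] using haA.2
  have hanec : a ≠ c := by
    intro h
    rw [h] at hgapos
    exact absurd hgapos (not_le.mpr hclt)
  have hac : a < c := lt_of_le_of_ne hale hanec
  have hIoc : ∀ x ∈ Ioc a c, w x < z x := by
    intro x hx
    by_contra hcontra
    push_neg at hcontra
    have : x ∈ A := ⟨⟨hax₀.trans hx.1.le, hx.2⟩, by simp [hgdef]; linarith⟩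
    exact absurd (le_csSup hAbdd this) (not_le.mpr hx.1)
  -- Wronskian
  set W : ℝ → ℝ := fun x => z1 x * w x - z x * w1 x with hWdef
  have hWcont : ContinuousOn W (Ici x₀) :=
    ((hz.cont1.mul hwcont).sub (hz.contOn.mul hw1cont))
  have hWderiv : ∀ x, x₀ < x → w x < z x →
      HasDerivAt W (z x * w x * (f (w x) x - f (z x) x)) x ∧
      0 < z x * w x * (f (w x) x - f (z x) x) := by
    intro x hx hwz
    have h1 : HasDerivAt W
        ((derivWithin z1 (Ici x₀) x * w x + z1 x * w1 x) -
         (z1 x * w1 x + z x * (derivWithin z1 (Ici x₀) (x + L)))) x := by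
      exact (((hz.hasDerivAt1 hx).mul (hwderiv x hx.le)).sub
        ((hz.hasDerivAt' hx).mul (hw1deriv x hx.le)))
    have h2 : derivWithin z1 (Ici x₀) x = -(z x * f (z x) x) := hz2 x hx.le
    have h3 : derivWithin z1 (Ici x₀) (x + L) = -(w x * f (w x) x) := by
      rw [hz2 (x + L) (by linarith : x₀ ≤ x + L)]
      simp only [hwdef]
      rw [hper]
    have heq : (derivWithin z1 (Ici x₀) x * w x + z1 x * w1 x) -
         (z1 x * w1 x + z x * (derivWithin z1 (Ici x₀) (x + L)))
         = z x * w x * (f (w x) x - f (z x) x) := by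
      rw [h2, h3]; ring
    rw [heq] at h1
    refine ⟨h1, ?_⟩
    have hfa : f (z x) x < f (w x) x := hanti x hwz
    have := hzpos x hx
    have := hwpos x hx.le
    have : 0 < f (w x) x - f (z x) x := by linarith
    positivity
  -- W a ≥ 0
  have hWa : 0 ≤ W a := by
    rcases eq_or_lt_of_le hax₀ with h | h
    · -- a = x₀
      simp only [hWdef]
      rw [← h, hz.zero_at]
      have h1 := hz.start_deriv_nonneg
      have h2 := (hwpos x₀ le_rfl).le
      nlinarith [mul_nonneg h1 h2]
    · -- a > x₀ : then z a = w a and w1 a ≤ z1 a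
      have hga0 : w a ≤ z a := by
        -- g > 0 on (a, c], g continuous at a
        have hga : ContinuousAt g a := hgcont.continuousAt (Ici_mem_nhds h)
        have h5 : Tendsto g (𝓝[>] a) (𝓝 (g a)) :=
          hga.tendsto.mono_left nhdsWithin_le_nhds
        have h6 : 0 ≤ g a := by
          refine ge_of_tendsto h5 ?_
          filter_upwards [Ioc_mem_nhdsGT_of_mem ⟨le_refl _, hac⟩] with x hx
          have := hIoc x hx
          simp only [hgdef]
          linarith
        simp only [hgdef] at h6
        linarith
      have hzawa : z a = w a := le_antisymm hgapos hga0
      -- slope: v = w - z, v a = 0, v < 0 on (a,c] ⇒ v' a ≤ 0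
      have hv : HasDerivAt (fun x => w x - z x) (w1 a - z1 a) a :=
        (hwderiv a hax₀).sub (hz.hasDerivAt' h)
      have hslope : w1 a - z1 a ≤ 0 := by
        have h5 := (hv.hasDerivWithinAt (s := Ioi a))
        rw [hasDerivWithinAt_iff_tendsto_slope] at h5
        have h6 : Ioi a \ {a} = Ioi a := by simp
        rw [h6] at h5
        refine le_of_tendsto h5 ?_
        filter_upwards [Ioc_mem_nhdsGT_of_mem ⟨le_refl _, hac⟩] with x hx
        rw [slope_def_field]
        have hwx : w x < z x := hIoc x hx
        have hx3 : a < x := hx.1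
        have num : (w x - z x) - (w a - z a) < 0 := by
          rw [hzawa]; linarith
        apply div_nonpos_of_nonpos_of_nonneg (by linarith) (by linarith)
      have hza : 0 ≤ z a := hz.nonneg a hax₀
      simp only [hWdef]
      calc (0:ℝ) ≤ z a * (z1 a - w1 a) := by nlinarith
        _ = z1 a * w a - z a * w1 a := by rw [← hzawa]; ring
  -- case split on whether z ≤ w ever happens at or beyond c
  set B : Set ℝ := Ici c ∩ g ⁻¹' (Iic 0) with hBdef
  rcases B.eq_empty_or_nonempty with hBemp | hBne
  · -- B empty : w < z on (a, ∞)
    have hgt : ∀ x, a < x → w x < z x := by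
      intro x hx
      rcases le_or_gt x c with h | h
      · exact hIoc x ⟨hx, h⟩
      · by_contra hcontra
        push_neg at hcontra
        have : x ∈ B := ⟨h.le, by simp only [mem_preimage, mem_Iic, hgdef]; linarith⟩
        rw [hBemp] at this
        exact this
    obtain ⟨M, hM⟩ := hz.bdd
    have hM0 : 0 < M :=
      lt_of_lt_of_le (hzpos c hcx₀) (le_trans (le_abs_self _) (hM c hc))
    have hWmonoX : ∀ X, StrictMonoOn W (Icc a X) := by
      intro X
      apply strictMonoOn_of_deriv_pos (convex_Icc _ _)
        (hWcont.mono (fun x hx => hax₀.trans hx.1))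
      intro x hx
      rw [interior_Icc] at hx
      have hx0 : x₀ < x := lt_of_le_of_lt hax₀ hx.1
      obtain ⟨hd, hp⟩ := hWderiv x hx0 (hgt x hx.1)
      rw [hd.deriv]; exact hp
    set κ := W c with hκdef
    have hκ : 0 < κ :=
      lt_of_le_of_lt hWa ((hWmonoX c) ⟨le_refl a, hac.le⟩ ⟨hac.le, le_refl c⟩ hac)
    have hWge : ∀ x, c ≤ x → κ ≤ W x := by
      intro x hx
      exact (hWmonoX x).monotoneOn ⟨hac.le, hx⟩ ⟨hac.le.trans hx, le_refl x⟩ hx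
    set q : ℝ → ℝ := fun x => w x / z x with hqdef
    have hq0 : 0 ≤ q c := div_nonneg (hwpos c hc).le (hzpos c hcx₀).le
    set δ := κ / M ^ 2 with hδdef
    have hδpos : 0 < δ := div_pos hκ (by positivity)
    set X := c + (q c + 1) / δ with hXdef
    have hcX : c < X := by
      rw [hXdef]
      exact lt_add_of_pos_right c (div_pos (by linarith) hδpos)
    have hqd : ∀ x ∈ Ioo c X, HasDerivAt (fun y => q y + δ * y)
        ((w1 x * z x - w x * z1 x) / (z x) ^ 2 + δ) x := by
      intro x hx
      have hx0 : x₀ < x := hcx₀.trans hx.1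
      have h1 : HasDerivAt q ((w1 x * z x - w x * z1 x) / (z x) ^ 2) x :=
        (hwderiv x hx0.le).div (hz.hasDerivAt' hx0) (ne_of_gt (hzpos x hx0))
      have h2 : HasDerivAt (fun y => δ * y) δ x := by
        simpa using (hasDerivAt_id x).const_mul δ
      exact h1.add h2
    have hder_le : ∀ x ∈ Ioo c X,
        (w1 x * z x - w x * z1 x) / (z x) ^ 2 + δ ≤ 0 := by
      intro x hx
      have hx0 : x₀ < x := hcx₀.trans hx.1
      have hzx := hzpos x hx0
      have hWx := hWge x hx.1.le
      have hnum : w1 x * z x - w x * z1 x = -W x := by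
        simp only [hWdef]; ring
      rw [hnum]
      have hzM : z x ≤ M := le_trans (le_abs_self _) (hM x hx0.le)
      have hz2M : (z x) ^ 2 ≤ M ^ 2 := by nlinarith
      have hle : δ ≤ W x / (z x) ^ 2 := by
        rw [hδdef]
        exact div_le_div₀ (le_of_lt (hκ.trans_le hWx)) hWx (by positivity) hz2M
      have : -W x / (z x) ^ 2 = -(W x / (z x) ^ 2) := by ring
      rw [this]
      linarith
    have hqcont : ContinuousOn (fun y => q y + δ * y) (Icc c X) := by
      apply ContinuousOn.add
      · apply ContinuousOn.div
        · exact hwcont.mono (fun x hx => hc.trans hx.1)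
        · exact hz.contOn.mono (fun x hx => hc.trans hx.1)
        · intro x hx
          exact ne_of_gt (hzpos x (hcx₀.trans_le hx.1))
      · exact (continuous_const.mul continuous_id).continuousOn
    have hant : AntitoneOn (fun y => q y + δ * y) (Icc c X) := by
      apply antitoneOn_of_deriv_nonpos (convex_Icc _ _) hqcont
      · intro x hx
        rw [interior_Icc] at hx
        exact (hqd x hx).differentiableAt.differentiableWithinAt
      · intro x hx
        rw [interior_Icc] at hx
        rw [(hqd x hx).deriv]
        exact hder_le x hx
    have hfin : q X + δ * X ≤ q c + δ * c :=
      hant ⟨le_refl c, hcX.le⟩ ⟨hcX.le, le_refl X⟩ hcX.le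
    have hδX : δ * (X - c) = q c + 1 := by
      rw [hXdef]
      field_simp
      ring
    have hqX : 0 ≤ q X :=
      div_nonneg (hwpos X (hc.trans hcX.le)).le (hzpos X (hcx₀.trans hcX)).le
    nlinarith [hfin, hδX, hqX]
  · -- B nonempty
    have hBclosed : IsClosed B :=
      (hgcont.mono (Ici_subset_Ici.mpr hc)).preimage_isClosed_of_isClosed
        isClosed_Ici isClosed_Iic
    have hBbdd : BddBelow B := ⟨c, fun x hx => hx.1⟩
    set b := sInf B with hbdef
    have hbB : b ∈ B := hBclosed.csInf_mem hBne hBbdd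
    have hcb : c ≤ b := hbB.1
    have hab : a < b := hac.trans_le hcb
    have hbx₀ : x₀ < b := lt_of_le_of_lt hax₀ hab
    have hltb : ∀ x ∈ Ioo a b, w x < z x := by
      intro x hx
      rcases le_or_gt x c with h | h
      · exact hIoc x ⟨hx.1, h⟩
      · by_contra hcontra
        push_neg at hcontra
        have : x ∈ B := ⟨h.le, by simp only [mem_preimage, mem_Iic, hgdef]; linarith⟩
        exact absurd hx.2 (not_lt.mpr (csInf_le hBbdd this))
    have hWmono : StrictMonoOn W (Icc a b) := by
      apply strictMonoOn_of_deriv_pos (convex_Icc _ _)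
        (hWcont.mono (fun x hx => hax₀.trans hx.1))
      intro x hx
      rw [interior_Icc] at hx
      have hx0 : x₀ < x := lt_of_le_of_lt hax₀ hx.1
      obtain ⟨hd, hp⟩ := hWderiv x hx0 (hltb x hx)
      rw [hd.deriv]; exact hp
    -- z b = w b
    have hgb : z b ≤ w b := by
      have := hbB.2
      simp only [mem_preimage, mem_Iic, hgdef] at this
      linarith
    have hgb' : w b ≤ z b := by
      have hgbc : ContinuousAt g b := hgcont.continuousAt (Ici_mem_nhds hbx₀)
      have h5 : Tendsto g (𝓝[<] b) (𝓝 (g b)) :=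
        hgbc.tendsto.mono_left nhdsWithin_le_nhds
      have h6 : 0 ≤ g b := by
        refine ge_of_tendsto h5 ?_
        filter_upwards [Ioo_mem_nhdsLT_of_mem ⟨hab, le_refl b⟩] with x hx
        have := hltb x hx
        simp only [hgdef]
        linarith
      simp only [hgdef] at h6
      linarith
    have hzwb : z b = w b := le_antisymm hgb hgb'
    -- slope from the left : z1 b ≤ w1 b
    have hv : HasDerivAt (fun x => w x - z x) (w1 b - z1 b) b :=
      (hwderiv b hbx₀.le).sub (hz.hasDerivAt' hbx₀)
    have hslope : 0 ≤ w1 b - z1 b := by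
      have h5 := hv.hasDerivWithinAt (s := Iio b)
      rw [hasDerivWithinAt_iff_tendsto_slope] at h5
      have h6 : Iio b \ {b} = Iio b := by simp
      rw [h6] at h5
      refine ge_of_tendsto h5 ?_
      filter_upwards [Ioo_mem_nhdsLT_of_mem ⟨hab, le_refl b⟩] with x hx
      rw [slope_def_field]
      have hwx : w x < z x := hltb x hx
      have num : ((w x - z x) - (w b - z b)) < 0 := by
        rw [hzwb]; linarith
      have den : x - b < 0 := by linarith [hx.2]
      exact le_of_lt (div_pos_of_neg_of_neg num den)
    have hzb : 0 < z b := hzpos b hbx₀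
    have hWb : W b ≤ 0 := by
      simp only [hWdef]
      calc z1 b * w b - z b * w1 b = z b * (z1 b - w1 b) := by rw [← hzwb]; ring
        _ ≤ 0 := mul_nonpos_of_nonneg_of_nonpos hzb.le (by linarith)
    have := hWmono ⟨le_refl a, hab.le⟩ ⟨hab.le, le_refl b⟩ hab
    linarith



end IsDuLin

/-- gluing two Du–Lin solutions with matching slopes at `x_e` produces
a segregated stationary equilibrium (in particular `C²` on all of `ℝ`, solving
`-e'' = η(e, ·)` everywhere). -/
theorem seg_equilibrium_from_matching_slopes
    (L d α a₁ a₂ : ℝ) (hL : 0 < L) (hd : 0 < d) (hα : 0 < α)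
    (f₁ f₂ : ℝ → ℝ → ℝ) (hf₁ : Admissible L f₁ a₁) (hf₂ : Admissible L f₂ a₂)
    (xe : ℝ) (zp zn : ℝ → ℝ)
    (hzp : IsDuLin xe (fun u y => f₁ (u / α) (2 * xe - y)) zp)
    (hzn : IsDuLin xe (fun u y => (1 / d) * f₂ (u / d) y) zn)
    (heq : derivWithin zp (Ici xe) xe = derivWithin zn (Ici xe) xe) :
    SegEquilibrium L d α f₁ f₂
      (fun y => if y < xe then zp (2 * xe - y) else -(zn y)) := by
  -- notation
  set fp : ℝ → ℝ → ℝ := fun u y => f₁ (u / α) (2 * xe - y) with hfpdef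
  set fn : ℝ → ℝ → ℝ := fun u y => (1 / d) * f₂ (u / d) y with hfndef
  -- smoothness of the nonlinearities
  have hfpsm : ContDiff ℝ 1 (uncurry fp) := by
    have h1 : ContDiff ℝ 1 (fun p : ℝ × ℝ => (p.1 / α, 2 * xe - p.2)) :=
      (contDiff_fst.div_const α).prodMk (contDiff_const.sub contDiff_snd)
    exact hf₁.smooth.comp h1
  have hfnsm : ContDiff ℝ 1 (uncurry fn) := by
    have h1 : ContDiff ℝ 1 (fun p : ℝ × ℝ => (p.1 / d, p.2)) :=
      (contDiff_fst.div_const d).prodMk contDiff_snd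
    exact contDiff_const.mul (hf₂.smooth.comp h1)
  have hfpper : ∀ u x, fp u (x + L) = fp u x := by
    intro u x
    simp only [hfpdef]
    have := hf₁.periodic (u / α) (2 * xe - x - L)
    rw [show 2 * xe - (x + L) = 2 * xe - x - L by ring]
    rw [← this]
    ring_nf
  have hfnper : ∀ u x, fn u (x + L) = fn u x := by
    intro u x
    simp only [hfndef, hf₂.periodic]
  have hfpanti : ∀ x, StrictAnti (fun u => fp u x) := by
    intro x u v huv
    exact hf₁.strict_anti (2 * xe - x) (by exact div_lt_div_of_pos_right huv hα)
  have hfnanti : ∀ x, StrictAnti (fun u => fn u x) := by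
    intro x u v huv
    simp only [hfndef]
    have h2 : f₂ (v / d) x < f₂ (u / d) x :=
      hf₂.strict_anti x (div_lt_div_of_pos_right huv hd)
    have h3 : 0 < 1 / d := by positivity
    exact mul_lt_mul_of_pos_left h2 h3
  -- abbreviations
  set z1p := derivWithin zp (Ici xe) with hz1pdef
  set z2p := derivWithin z1p (Ici xe) with hz2pdef
  set z1n := derivWithin zn (Ici xe) with hz1ndef
  set z2n := derivWithin z1n (Ici xe) with hz2ndef
  set e : ℝ → ℝ := fun y => if y < xe then zp (2 * xe - y) else -(zn y) with hedef
  set e1 : ℝ → ℝ := fun y => if y < xe then -(z1p (2 * xe - y)) else -(z1n y) with he1def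
  set e2 : ℝ → ℝ := fun y => if y < xe then z2p (2 * xe - y) else -(z2n y) with he2def
  have hz2p_eq := hzp.z2_eq hfpsm.continuous
  have hz2n_eq := hzn.z2_eq hfnsm.continuous
  rw [← hz1pdef, ← hz2pdef] at hz2p_eq
  rw [← hz1ndef, ← hz2ndef] at hz2n_eq
  have hz2pxe : z2p xe = 0 := by
    rw [hz2p_eq xe self_mem_Ici, hzp.zero_at, zero_mul, neg_zero]
  have hz2nxe : z2n xe = 0 := by
    rw [hz2n_eq xe self_mem_Ici, hzn.zero_at, zero_mul, neg_zero]
  have hexe : e xe = 0 := by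
    simp only [hedef]
    rw [if_neg (lt_irrefl xe), hzn.zero_at, neg_zero]
  -- the inner function and its derivative
  have hinner : ∀ y : ℝ, HasDerivAt (fun x : ℝ => 2 * xe - x) (-1) y := by
    intro y
    simpa using (hasDerivAt_id y).const_sub (2 * xe)
  have hζ : ∀ y : ℝ, y < xe → xe < 2 * xe - y := by intro y hy; linarith
  have hmaps : MapsTo (fun x : ℝ => 2 * xe - x) (Iic xe) (Ici xe) := by
    intro x hx
    simp only [mem_Iic] at hx
    simp only [mem_Ici]
    linarith
  -- e agrees with pieces
  have heIic : ∀ x ∈ Iic xe, e x = zp (2 * xe - x) := by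
    intro x hx
    rcases lt_or_eq_of_le (mem_Iic.mp hx) with h | h
    · simp only [hedef, if_pos h]
    · subst h
      rw [hexe]
      rw [show 2 * x - x = x by ring, hzp.zero_at]
  have heIci : ∀ x ∈ Ici xe, e x = -(zn x) := by
    intro x hx
    simp only [hedef, if_neg (not_lt.mpr (mem_Ici.mp hx))]
  have he1Iic : ∀ x ∈ Iic xe, e1 x = -(z1p (2 * xe - x)) := by
    intro x hx
    rcases lt_or_eq_of_le (mem_Iic.mp hx) with h | h
    · simp only [he1def, if_pos h]
    · subst h
      simp only [he1def, if_neg (lt_irrefl x)]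
      rw [show 2 * x - x = x by ring, heq]
  have he1Ici : ∀ x ∈ Ici xe, e1 x = -(z1n x) := by
    intro x hx
    simp only [he1def, if_neg (not_lt.mpr (mem_Ici.mp hx))]
  have he2Iic : ∀ x ∈ Iic xe, e2 x = z2p (2 * xe - x) := by
    intro x hx
    rcases lt_or_eq_of_le (mem_Iic.mp hx) with h | h
    · simp only [he2def, if_pos h]
    · subst h
      simp only [he2def, if_neg (lt_irrefl x)]
      rw [show 2 * x - x = x by ring, hz2pxe, hz2nxe, neg_zero]
  have he2Ici : ∀ x ∈ Ici xe, e2 x = -(z2n x) := by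
    intro x hx
    simp only [he2def, if_neg (not_lt.mpr (mem_Ici.mp hx))]
  -- first derivative everywhere
  have hd1 : ∀ y, HasDerivAt e (e1 y) y := by
    intro y
    rcases lt_trichotomy y xe with hy | hy | hy
    · have hz : xe < 2 * xe - y := hζ y hy
      have h1 : HasDerivAt (fun x => zp (2 * xe - x)) (z1p (2 * xe - y) * (-1)) y :=
        (hzp.hasDerivAt' hz).comp y (hinner y)
      have h2 : e =ᶠ[𝓝 y] fun x => zp (2 * xe - x) := by
        filter_upwards [Iio_mem_nhds hy] with x hx
        exact heIic x (mem_Iic.mpr (le_of_lt hx))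
      have h3 := h1.congr_of_eventuallyEq h2
      have h4 : e1 y = z1p (2 * xe - y) * (-1) := by
        simp only [he1def, if_pos hy]; ring
      rw [h4]; exact h3
    · subst hy
      have hright : HasDerivWithinAt e (-(z1n y)) (Ici y) y := by
        have h1 := (hzn.start_hasDerivWithinAt).neg
        exact h1.congr (fun x hx => heIci x hx) (heIci y self_mem_Ici)
      have hleft : HasDerivWithinAt e (-(z1n y)) (Iic y) y := by
        have h1 : HasDerivWithinAt zp (z1p y) (Ici y) (2 * y - y) := by
          rw [show 2 * y - y = y by ring]
          exact hzp.start_hasDerivWithinAt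
        have h2 : HasDerivWithinAt (fun x : ℝ => 2 * y - x) (-1) (Iic y) y :=
          (hinner y).hasDerivWithinAt
        have h3 := HasDerivWithinAt.comp y h1 h2 hmaps
        have h4 : z1p y * (-1) = -(z1n y) := by rw [heq]; ring
        rw [h4] at h3
        exact h3.congr (fun x hx => heIic x hx) (heIic y self_mem_Iic)
      have h5 := hleft.union hright
      rw [Iic_union_Ici] at h5
      have h6 : e1 y = -(z1n y) := he1Ici y self_mem_Ici
      rw [h6]
      exact h5.hasDerivAt univ_mem
    · have h1 : HasDerivAt (fun x => -(zn x)) (-(z1n y)) y := (hzn.hasDerivAt' hy).neg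
      have h2 : e =ᶠ[𝓝 y] fun x => -(zn x) := by
        filter_upwards [Ioi_mem_nhds hy] with x hx
        exact heIci x (le_of_lt (mem_Ioi.mp hx))
      have h4 : e1 y = -(z1n y) := he1Ici y hy.le
      rw [h4]
      exact h1.congr_of_eventuallyEq h2
  -- second derivative everywhere
  have hd2 : ∀ y, HasDerivAt e1 (e2 y) y := by
    intro y
    rcases lt_trichotomy y xe with hy | hy | hy
    · have hz : xe < 2 * xe - y := hζ y hy
      have h1 : HasDerivAt (fun x => -(z1p (2 * xe - x))) (-(z2p (2 * xe - y) * (-1))) y :=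
        ((hzp.hasDerivAt1 hz).comp y (hinner y)).neg
      have h2 : e1 =ᶠ[𝓝 y] fun x => -(z1p (2 * xe - x)) := by
        filter_upwards [Iio_mem_nhds hy] with x hx
        exact he1Iic x (mem_Iic.mpr (le_of_lt hx))
      have h4 : e2 y = -(z2p (2 * xe - y) * (-1)) := by
        simp only [he2def, if_pos hy]; ring
      rw [h4]
      exact h1.congr_of_eventuallyEq h2
    · subst hy
      have hright : HasDerivWithinAt e1 (-(z2n y)) (Ici y) y := by
        have h1 := (hzn.start_hasDerivWithinAt1).neg
        exact h1.congr (fun x hx => he1Ici x hx) (he1Ici y self_mem_Ici)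
      have hleft : HasDerivWithinAt e1 (-(z2n y)) (Iic y) y := by
        have h1 : HasDerivWithinAt z1p (z2p y) (Ici y) (2 * y - y) := by
          rw [show 2 * y - y = y by ring]
          exact hzp.start_hasDerivWithinAt1
        have h3 := (HasDerivWithinAt.comp y h1 ((hinner y).hasDerivWithinAt) hmaps).neg
        have h4 : -(z2p y * (-1)) = -(z2n y) := by rw [hz2pxe, hz2nxe]; ring
        rw [h4] at h3
        exact h3.congr (fun x hx => by rw [he1Iic x hx]; rfl) (by rw [he1Iic y self_mem_Iic]; rfl)
      have h5 := hleft.union hright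
      rw [Iic_union_Ici] at h5
      rw [he2Ici y self_mem_Ici]
      exact h5.hasDerivAt univ_mem
    · have h1 : HasDerivAt (fun x => -(z1n x)) (-(z2n y)) y := (hzn.hasDerivAt1 hy).neg
      have h2 : e1 =ᶠ[𝓝 y] fun x => -(z1n x) := by
        filter_upwards [Ioi_mem_nhds hy] with x hx
        exact he1Ici x (le_of_lt (mem_Ioi.mp hx))
      rw [he2Ici y hy.le]
      exact h1.congr_of_eventuallyEq h2
  -- continuity of e2
  have hc2 : Continuous e2 := by
    rw [continuous_iff_continuousAt]
    intro y
    rcases lt_trichotomy y xe with hy | hy | hy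
    · have hz : xe < 2 * xe - y := hζ y hy
      have h1 : ContinuousAt (fun x => z2p (2 * xe - x)) y := by
        have h2 : ContinuousAt z2p (2 * xe - y) :=
          hzp.cont2.continuousAt (Ici_mem_nhds hz)
        exact h2.comp ((hinner y).continuousAt)
      apply h1.congr
      filter_upwards [Iio_mem_nhds hy] with x hx
      exact (he2Iic x (mem_Iic.mpr (le_of_lt hx))).symm
    · subst hy
      rw [← continuousWithinAt_univ, ← Iic_union_Ici (a := y)]
      apply ContinuousWithinAt.union
      · have h1 : ContinuousWithinAt (fun x => z2p (2 * y - x)) (Iic y) y := by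
          have h2 : ContinuousWithinAt z2p (Ici y) (2 * y - y) := by
            rw [show 2 * y - y = y by ring]
            exact hzp.cont2 y self_mem_Ici
          exact h2.comp ((hinner y).continuousAt).continuousWithinAt hmaps
        exact h1.congr (fun x hx => he2Iic x hx) (he2Iic y self_mem_Iic)
      · have h1 : ContinuousWithinAt (fun x => -(z2n x)) (Ici y) y :=
          (hzn.cont2 y self_mem_Ici).neg
        exact h1.congr (fun x hx => he2Ici x hx) (he2Ici y self_mem_Ici)
    · have h1 : ContinuousAt (fun x => -(z2n x)) y :=
        (hzn.cont2.continuousAt (Ici_mem_nhds hy)).neg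
      apply h1.congr
      filter_upwards [Ioi_mem_nhds hy] with x hx
      exact (he2Ici x (mem_Ioi.mp hx).le).symm
  have hderiv_e : deriv e = e1 := funext fun y => (hd1 y).deriv
  have hderiv_e1 : deriv e1 = e2 := funext fun y => (hd2 y).deriv
  -- assemble
  constructor
  -- smooth
  · show ContDiff ℝ 2 e
    rw [show (2 : WithTop ℕ∞) = 1 + 1 from rfl]
    rw [contDiff_succ_iff_deriv]
    refine ⟨fun y => (hd1 y).differentiableAt, by simp, ?_⟩
    rw [hderiv_e, contDiff_one_iff_deriv]
    exact ⟨fun y => (hd2 y).differentiableAt, hderiv_e1 ▸ hc2⟩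
  -- bdd
  · obtain ⟨Mp, hMp⟩ := hzp.bdd
    obtain ⟨Mn, hMn⟩ := hzn.bdd
    refine ⟨max Mp Mn, fun x => ?_⟩
    by_cases hx : x < xe
    · show |e x| ≤ _
      rw [heIic x hx.le]
      exact le_trans (hMp _ (le_of_lt (hζ x hx))) (le_max_left _ _)
    · show |e x| ≤ _
      rw [heIci x (not_lt.mp hx), abs_neg]
      exact le_trans (hMn _ (not_lt.mp hx)) (le_max_right _ _)
  -- ode
  · intro x
    show -(deriv (deriv e) x) = eta d α f₁ f₂ (e x) x
    rw [hderiv_e, hderiv_e1]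
    by_cases hx : x < xe
    · have hz : xe < 2 * xe - x := hζ x hx
      have hex : e x = zp (2 * xe - x) := heIic x hx.le
      have hnn : 0 ≤ e x := hex ▸ hzp.nonneg _ hz.le
      have h1 : e2 x = z2p (2 * xe - x) := by simp only [he2def, if_pos hx]
      rw [h1, hz2p_eq _ hz.le]
      simp only [eta, max_eq_left hnn, min_eq_right hnn, neg_zero, mul_zero, sub_zero]
      rw [hex]
      have harg : 2 * xe - (2 * xe - x) = x := by ring
      simp only [hfpdef]
      rw [harg]
      ring
    · have hx' : xe ≤ x := not_lt.mp hx
      have hex : e x = -(zn x) := heIci x hx'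
      have hnn : 0 ≤ zn x := hzn.nonneg x hx'
      have hle : e x ≤ 0 := by rw [hex]; linarith
      have h1 : e2 x = -(z2n x) := he2Ici x hx'
      rw [h1, hz2n_eq _ hx']
      simp only [eta, max_eq_right hle, min_eq_left hle, mul_zero, zero_sub]
      rw [hex]
      simp only [hfndef]
      rw [show -(-zn x) = zn x by ring]
      ring
  -- mono
  · have hslidep := hzp.slide hL hfpsm hfpper hfpanti
    have hsliden := hzn.slide hL hfnsm hfnper hfnanti
    have hstep : ∀ y, e (y + L) ≤ e y := by
      intro y
      by_cases h1 : y + L < xe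
      · have h2 : y < xe := by linarith
        have h3 : e (y + L) = zp (2 * xe - (y + L)) := heIic _ (le_of_lt h1)
        have h4 : e y = zp (2 * xe - y) := heIic _ (le_of_lt h2)
        rw [h3, h4]
        have h5 := hslidep (2 * xe - (y + L)) (by linarith)
        rw [show 2 * xe - (y + L) + L = 2 * xe - y by ring] at h5
        exact h5
      · have h1' : xe ≤ y + L := not_lt.mp h1
        by_cases h2 : y < xe
        · have h3 : e (y + L) = -(zn (y + L)) := heIci _ h1'
          have h4 : e y = zp (2 * xe - y) := heIic _ h2.le
          rw [h3, h4]
          have h5 : 0 ≤ zn (y + L) := hzn.nonneg _ h1'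
          have h6 : 0 ≤ zp (2 * xe - y) := hzp.nonneg _ (le_of_lt (hζ y h2))
          linarith
        · have h2' : xe ≤ y := not_lt.mp h2
          rw [heIci _ h1', heIci _ h2']
          have h5 := hsliden y h2'
          linarith
    intro x
    apply antitone_nat_of_succ_le
    intro n
    have harg : x + (↑(n + 1) : ℝ) * L = (x + n * L) + L := by push_cast; ring
    show e (x + (↑(n + 1) : ℝ) * L) ≤ e (x + n * L)
    rw [harg]
    exact hstep (x + n * L)
  -- pos
  · obtain ⟨x, hx, hne⟩ := hzp.nonzero
    have hlt : xe < x := by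
      rcases eq_or_lt_of_le (mem_Ici.mp hx) with h | h
      · exact absurd (h ▸ hzp.zero_at) hne
      · exact h
    refine ⟨2 * xe - x, ?_⟩
    have h1 : 2 * xe - x < xe := by linarith
    show 0 < e (2 * xe - x)
    rw [heIic _ h1.le, show 2 * xe - (2 * xe - x) = x by ring]
    exact lt_of_le_of_ne (hzp.nonneg x hx) (Ne.symm hne)
  -- neg
  · obtain ⟨x, hx, hne⟩ := hzn.nonzero
    have hlt : xe < x := by
      rcases eq_or_lt_of_le (mem_Ici.mp hx) with h | h
      · exact absurd (h ▸ hzn.zero_at) hne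
      · exact h
    refine ⟨x, ?_⟩
    show e x < 0
    rw [heIci _ hx]
    have := lt_of_le_of_ne (hzn.nonneg x hx) (Ne.symm hne)
    linarith
  -- tail
  · right
    refine ⟨xe, fun x hx => ?_⟩
    by_contra hcon
    push_neg at hcon
    have hx' : xe ≤ x := le_of_lt hcon
    have : e x = -(zn x) := heIci x hx'
    simp only [mem_setOf_eq] at hx
    rw [this] at hx
    have := hzn.nonneg x hx'
    linarith
end
end
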